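/- arXiv:1803.08777 — 5 statements merged into one kernel-verified Lean document; each statement's English description precedes it below -/
import Mathlib

section
/- Let f ∈ ℝ^n and k ≥ 1 an integer. Define Err_k(f)₂ = min over k-sparse vectors y ∈ ℝ^n of ‖f − y‖₂. Then Err_k(f)₂ ≤ k^{-1/2} ‖f‖₁. -/
/-- `Err_k(f)₂ ≤ k^{-1/2} ‖f‖₁`, where `Err_k(f)₂` is the minimum `ℓ₂` distance
from `f` to a `k`-sparse vector. -/
theorem stmt_4 (n k : ℕ) (hk : 1 ≤ k) (f : Fin n → ℝ) :
    sInf {x : ℝ | ∃ y : Fin n → ℝ, (Function.support y).ncard ≤ k ∧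
        x = Real.sqrt (∑ i, (f i - y i) ^ 2)}
      ≤ (k : ℝ) ^ (-(1/2 : ℝ)) * ∑ i, |f i| := by
  set A : ℝ := ∑ i, |f i| with hA
  have hA0 : 0 ≤ A := Finset.sum_nonneg fun i _ => abs_nonneg _
  set m := min k n with hm
  -- choose a maximizing subset of cardinality m
  obtain ⟨S, hScard, hSmax⟩ : ∃ S : Finset (Fin n), S.card = m ∧
      ∀ T : Finset (Fin n), T.card = m → ∑ i ∈ T, |f i| ≤ ∑ i ∈ S, |f i| := by
    have hne : (Finset.powersetCard m (Finset.univ : Finset (Fin n))).Nonempty := by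
      apply Finset.powersetCard_nonempty.mpr
      exact (min_le_right k n).trans_eq (by simp)
    obtain ⟨S, hS, hmax⟩ := Finset.exists_max_image _ (fun S => ∑ i ∈ S, |f i|) hne
    exact ⟨S, (Finset.mem_powersetCard.mp hS).2, fun T hT =>
      hmax T (Finset.mem_powersetCard.mpr ⟨Finset.subset_univ _, hT⟩)⟩
  -- key: every entry outside S satisfies k * |f i| ≤ A
  have key : ∀ i : Fin n, i ∉ S → (k : ℝ) * |f i| ≤ A := by
    intro i hi
    rcases le_or_gt n k with hnk | hkn
    · exfalso
      have : S = Finset.univ := Finset.eq_univ_of_card S (by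
        rw [hScard]
        simp [hm, Fintype.card_fin, min_eq_right hnk])
      exact hi (this ▸ Finset.mem_univ i)
    · have hSk : S.card = k := by rw [hScard, hm, min_eq_left hkn.le]
      have hle : ∀ j ∈ S, |f i| ≤ |f j| := by
        intro j hj
        by_contra hlt
        push_neg at hlt
        set T : Finset (Fin n) := insert i (S.erase j) with hT
        have hiT : i ∉ S.erase j := fun h => hi (Finset.mem_of_mem_erase h)
        have hTcard : T.card = m := by
          rw [hT, Finset.card_insert_of_notMem hiT, Finset.card_erase_of_mem hj, hSk]
          omega
        have hsum : ∑ x ∈ S, |f x| < ∑ x ∈ T, |f x| := by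
          rw [hT, Finset.sum_insert hiT,
            ← Finset.add_sum_erase S (fun x => |f x|) hj]
          linarith
        exact absurd (hSmax T hTcard) (not_le.mpr hsum)
      calc (k : ℝ) * |f i| = ∑ _j ∈ S, |f i| := by
            rw [Finset.sum_const, hSk, nsmul_eq_mul]
        _ ≤ ∑ j ∈ S, |f j| := Finset.sum_le_sum hle
        _ ≤ A := Finset.sum_le_sum_of_subset_of_nonneg (Finset.subset_univ S)
            (fun i _ _ => abs_nonneg _)
  -- candidate sparse vector
  set y : Fin n → ℝ := fun i => if i ∈ S then f i else 0 with hy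
  have hsupp : (Function.support y).ncard ≤ k := by
    have hsub : Function.support y ⊆ (S : Set (Fin n)) := by
      intro i hi
      by_contra h
      have h' : i ∉ S := by simpa using h
      exact hi (by simp [hy, h'])
    calc (Function.support y).ncard ≤ (S : Set (Fin n)).ncard :=
          Set.ncard_le_ncard hsub (S.finite_toSet)
      _ = S.card := Set.ncard_coe_finset S
      _ ≤ k := hScard ▸ min_le_left k n
  set x₀ : ℝ := Real.sqrt (∑ i, (f i - y i) ^ 2) with hx₀
  have hmem : x₀ ∈ {x : ℝ | ∃ y : Fin n → ℝ, (Function.support y).ncard ≤ k ∧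
      x = Real.sqrt (∑ i, (f i - y i) ^ 2)} := ⟨y, hsupp, rfl⟩
  have hbdd : BddBelow {x : ℝ | ∃ y : Fin n → ℝ, (Function.support y).ncard ≤ k ∧
      x = Real.sqrt (∑ i, (f i - y i) ^ 2)} := by
    refine ⟨0, fun x hx => ?_⟩
    obtain ⟨z, _, rfl⟩ := hx
    exact Real.sqrt_nonneg _
  refine le_trans (csInf_le hbdd hmem) ?_
  -- now bound x₀
  have hk0 : (0 : ℝ) < k := by exact_mod_cast hk
  have hsum_bound : ∑ i, (f i - y i) ^ 2 ≤ A ^ 2 / k := by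
    have h1 : ∑ i, (f i - y i) ^ 2 = ∑ i ∈ Finset.univ.filter (· ∉ S), f i ^ 2 := by
      rw [Finset.sum_filter]
      apply Finset.sum_congr rfl
      intro i _
      by_cases h : i ∈ S <;> simp [hy, h]
    rw [h1]
    have h2 : ∀ i ∈ Finset.univ.filter (· ∉ S), f i ^ 2 ≤ (A / k) * |f i| := by
      intro i hi
      have hiS : i ∉ S := by simpa using hi
      have := key i hiS
      have h3 : |f i| ≤ A / k := by rw [le_div_iff₀ hk0]; linarith
      calc f i ^ 2 = |f i| * |f i| := by rw [sq, ← abs_mul_abs_self]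
        _ ≤ (A / k) * |f i| := mul_le_mul_of_nonneg_right h3 (abs_nonneg _)
    calc ∑ i ∈ Finset.univ.filter (· ∉ S), f i ^ 2
        ≤ ∑ i ∈ Finset.univ.filter (· ∉ S), (A / k) * |f i| := Finset.sum_le_sum h2
      _ = (A / k) * ∑ i ∈ Finset.univ.filter (· ∉ S), |f i| := by
          rw [Finset.mul_sum]
      _ ≤ (A / k) * A := by
          apply mul_le_mul_of_nonneg_left _ (div_nonneg hA0 hk0.le)
          exact Finset.sum_le_sum_of_subset_of_nonneg (Finset.filter_subset _ _)
            (fun i _ _ => abs_nonneg _)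
      _ = A ^ 2 / k := by ring
  calc x₀ ≤ Real.sqrt (A ^ 2 / k) := Real.sqrt_le_sqrt hsum_bound
    _ = A / Real.sqrt k := by
        rw [Real.sqrt_div (sq_nonneg A), Real.sqrt_sq hA0]
    _ = (k : ℝ) ^ (-(1/2 : ℝ)) * A := by
        rw [Real.rpow_neg (Nat.cast_nonneg k), ← Real.sqrt_eq_rpow, div_eq_inv_mul]
end

section
/- Let f, y ∈ ℝ^n, k ≥ 1, and E ≥ 0 satisfy |y_i − f_i| ≤ E for all i ∈ [n]. Let ŷ be the best k-sparse approximation to y (the vector keeping the k largest-magnitude coordinates of y and zeroing the rest). Then Err_k(f)₂ ≤ ‖f − ŷ‖₂ ≤ 5(√k · E + Err_k(f)₂), where Err_k(f)₂ = min over k-sparse z of ‖f − z‖₂. -/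
set_option maxHeartbeats 1000000 in
/-- If `|y i - f i| ≤ E` for all `i` and `ŷ` keeps the `k` largest-magnitude coordinates of `y`
(zeroing the rest), then `Err_k(f)₂ ≤ ‖f - ŷ‖₂ ≤ 5(√k E + Err_k(f)₂)`. -/
theorem stmt_5 (n k : ℕ) (hk : 1 ≤ k) (f y : Fin n → ℝ) (E : ℝ) (hE : 0 ≤ E)
    (herr : ∀ i, |y i - f i| ≤ E)
    (A : Finset (Fin n)) (hAcard : A.card = min k n)
    (htop : ∀ i ∈ A, ∀ j ∉ A, |y j| ≤ |y i|)
    (yhat : Fin n → ℝ) (hyhat : ∀ i, yhat i = if i ∈ A then y i else 0) :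
    sInf {x : ℝ | ∃ z : Fin n → ℝ, (Function.support z).ncard ≤ k ∧
        x = Real.sqrt (∑ i, (f i - z i) ^ 2)} ≤ Real.sqrt (∑ i, (f i - yhat i) ^ 2) ∧
    Real.sqrt (∑ i, (f i - yhat i) ^ 2) ≤
      5 * (Real.sqrt k * E +
        sInf {x : ℝ | ∃ z : Fin n → ℝ, (Function.support z).ncard ≤ k ∧
          x = Real.sqrt (∑ i, (f i - z i) ^ 2)}) := by
  classical
  set S : Set ℝ := {x : ℝ | ∃ z : Fin n → ℝ, (Function.support z).ncard ≤ k ∧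
      x = Real.sqrt (∑ i, (f i - z i) ^ 2)} with hSdef
  have hsub : Function.support yhat ⊆ ↑A := by
    intro i hi
    rw [Function.mem_support] at hi
    by_contra h
    exact hi (by rw [hyhat i, if_neg (fun hA => h (Finset.mem_coe.mpr hA))])
  have hyk : (Function.support yhat).ncard ≤ k := by
    calc (Function.support yhat).ncard ≤ (↑A : Set (Fin n)).ncard :=
          Set.ncard_le_ncard hsub A.finite_toSet
      _ = A.card := Set.ncard_coe_finset A
      _ ≤ k := by omega
  have hmem : Real.sqrt (∑ i, (f i - yhat i) ^ 2) ∈ S := ⟨yhat, hyk, rfl⟩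
  have hne : S.Nonempty := ⟨_, hmem⟩
  have hbdd : BddBelow S := ⟨0, by rintro x ⟨z, -, rfl⟩; positivity⟩
  have hI0 : 0 ≤ sInf S := le_csInf hne (by rintro x ⟨z, -, rfl⟩; positivity)
  refine ⟨csInf_le hbdd hmem, ?_⟩
  apply le_of_forall_pos_le_add
  intro ε hε
  obtain ⟨x, hxS, hx⟩ := Real.lt_sInf_add_pos hne (show (0:ℝ) < ε/5 by positivity)
  obtain ⟨z, hzk, rfl⟩ := hxS
  set I := sInf S with hIdef
  set D : ℝ := I + ε/5 with hD
  have hD0 : 0 ≤ D := by rw [hD]; linarith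
  have hTD : (∑ i, (f i - z i) ^ 2) ≤ D ^ 2 := by
    have h1 : Real.sqrt (∑ i, (f i - z i) ^ 2) ≤ D := le_of_lt hx
    have h2 : (0:ℝ) ≤ ∑ i, (f i - z i) ^ 2 := by positivity
    nlinarith [Real.sq_sqrt h2, Real.sqrt_nonneg (∑ i, (f i - z i) ^ 2)]
  clear_value I D
  set B : Finset (Fin n) := (Set.toFinite (Function.support z)).toFinset with hBdef
  have hBcard : B.card ≤ k := by
    rw [hBdef, ← Set.ncard_eq_toFinset_card]; exact hzk
  have hzB : ∀ i ∉ B, z i = 0 := by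
    intro i hi
    by_contra h
    exact hi (by rw [hBdef]; simp only [Set.Finite.mem_toFinset, Function.mem_support]; exact h)
  clear_value B
  have htail : ∑ i ∈ Bᶜ, f i ^ 2 ≤ D ^ 2 := by
    calc ∑ i ∈ Bᶜ, f i ^ 2 = ∑ i ∈ Bᶜ, (f i - z i) ^ 2 := by
          refine Finset.sum_congr rfl fun i hi => ?_
          rw [hzB i (Finset.mem_compl.mp hi), sub_zero]
      _ ≤ ∑ i, (f i - z i) ^ 2 :=
          Finset.sum_le_sum_of_subset_of_nonneg (Finset.subset_univ _)
            (fun i _ _ => by positivity)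
      _ ≤ D ^ 2 := hTD
  have hhead : ∑ i ∈ A, (f i - y i) ^ 2 ≤ (k : ℝ) * E ^ 2 := by
    have hAk : A.card ≤ k := by omega
    calc ∑ i ∈ A, (f i - y i) ^ 2 ≤ A.card • E ^ 2 := by
          apply Finset.sum_le_card_nsmul
          intro i _
          nlinarith [herr i, abs_nonneg (y i - f i), sq_abs (y i - f i)]
      _ = (A.card : ℝ) * E ^ 2 := by rw [nsmul_eq_mul]
      _ ≤ (k : ℝ) * E ^ 2 := by
          apply mul_le_mul_of_nonneg_right _ (by positivity)
          exact_mod_cast hAk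
  have hmid : ∑ i ∈ B \ A, f i ^ 2 ≤ 2 * D ^ 2 + 8 * (k:ℝ) * E ^ 2 := by
    by_cases hAu : A = Finset.univ
    · rw [hAu]
      simp only [Finset.sdiff_eq_empty_iff_subset.mpr (Finset.subset_univ B)]
      simp only [Finset.sum_empty]
      positivity
    · have hkA : A.card = k := by
        rcases Nat.le_total k n with h | h
        · omega
        · exact absurd (Finset.eq_univ_of_card A (by rw [hAcard, Fintype.card_fin]; omega)) hAu
      have hc1 : (B \ A).card ≤ (A \ B).card := by
        have h1 := Finset.card_inter_add_card_sdiff B A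
        have h2 := Finset.card_inter_add_card_sdiff A B
        have h3 : (B ∩ A).card = (A ∩ B).card := by rw [Finset.inter_comm]
        omega
      rcases Finset.eq_empty_or_nonempty (A \ B) with hABe | hABne
      · have hBA : B \ A = ∅ := Finset.card_eq_zero.mp (by
          have := Finset.card_eq_zero.mpr hABe; omega)
        rw [hBA, Finset.sum_empty]
        positivity
      · set m : ℝ := (A \ B).inf' hABne (fun j => |f j|) with hm
        obtain ⟨j₀, hj₀, hmj₀⟩ := Finset.exists_mem_eq_inf' hABne (fun j => |f j|)
        have hm0 : 0 ≤ m := by rw [← hm] at hmj₀; rw [hmj₀]; exact abs_nonneg _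
        have hmle : ∀ j ∈ A \ B, m ≤ |f j| := fun j hj => Finset.inf'_le _ hj
        have hfi : ∀ i ∈ B \ A, |f i| ≤ m + 2 * E := by
          intro i hi
          have hiA : i ∉ A := (Finset.mem_sdiff.mp hi).2
          have hj0A : j₀ ∈ A := (Finset.mem_sdiff.mp hj₀).1
          have h1 : |y i| ≤ |y j₀| := htop j₀ hj0A i hiA
          have e1 : |f i| - |y i| ≤ |f i - y i| := abs_sub_abs_le_abs_sub _ _
          have e2 : |y j₀| - |f j₀| ≤ |y j₀ - f j₀| := abs_sub_abs_le_abs_sub _ _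
          have e3 : |f i - y i| = |y i - f i| := abs_sub_comm _ _
          rw [← hm] at hmj₀
          rw [hmj₀]
          rw [e3] at e1
          linarith [herr i, herr j₀]
        have hsum1 : ∑ i ∈ B \ A, f i ^ 2 ≤ ((B \ A).card : ℝ) * (2 * m ^ 2 + 8 * E ^ 2) := by
          calc ∑ i ∈ B \ A, f i ^ 2 ≤ (B \ A).card • (2 * m ^ 2 + 8 * E ^ 2) := by
                apply Finset.sum_le_card_nsmul
                intro i hi
                nlinarith [hfi i hi, abs_nonneg (f i), sq_abs (f i), hm0, hE,
                  sq_nonneg (m - 2 * E), sq_nonneg (|f i| - m - 2 * E)]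
            _ = ((B \ A).card : ℝ) * (2 * m ^ 2 + 8 * E ^ 2) := by rw [nsmul_eq_mul]
        have hsum2 : ((A \ B).card : ℝ) * m ^ 2 ≤ ∑ j ∈ A \ B, f j ^ 2 := by
          calc ((A \ B).card : ℝ) * m ^ 2 = (A \ B).card • m ^ 2 := by rw [nsmul_eq_mul]
            _ ≤ ∑ j ∈ A \ B, f j ^ 2 := Finset.card_nsmul_le_sum _ _ _ (fun j hj => by
                nlinarith [hmle j hj, sq_abs (f j)])
        have hsub2 : ∑ j ∈ A \ B, f j ^ 2 ≤ D ^ 2 := by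
          refine le_trans (Finset.sum_le_sum_of_subset_of_nonneg ?_
            (fun i _ _ => by positivity)) htail
          intro j hj
          simp only [Finset.mem_compl]
          exact (Finset.mem_sdiff.mp hj).2
        have hcBA : ((B \ A).card : ℝ) ≤ ((A \ B).card : ℝ) := by exact_mod_cast hc1
        have hcBk : ((B \ A).card : ℝ) ≤ (k : ℝ) := by
          exact_mod_cast le_trans (Finset.card_le_card Finset.sdiff_subset) hBcard
        nlinarith [hsum1, hsum2, hsub2, hcBA, hcBk, hm0, hE, sq_nonneg m, sq_nonneg E,
          (Nat.cast_nonneg (B \ A).card : (0:ℝ) ≤ ((B \ A).card : ℝ))]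
  have hsplit : ∑ i, (f i - yhat i) ^ 2 = ∑ i ∈ A, (f i - y i) ^ 2 + ∑ i ∈ Aᶜ, f i ^ 2 := by
    rw [← Finset.sum_add_sum_compl A]
    congr 1
    · exact Finset.sum_congr rfl fun i hi => by rw [hyhat i, if_pos hi]
    · exact Finset.sum_congr rfl fun i hi =>
        by rw [hyhat i, if_neg (Finset.mem_compl.mp hi), sub_zero]
  have hcomp : ∑ i ∈ Aᶜ, f i ^ 2 ≤ (∑ i ∈ B \ A, f i ^ 2) + ∑ i ∈ Bᶜ, f i ^ 2 := by
    have hsubU : Aᶜ ⊆ (B \ A) ∪ Bᶜ := by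
      intro i hi
      simp only [Finset.mem_union, Finset.mem_sdiff, Finset.mem_compl] at *
      tauto
    have hdisj : Disjoint (B \ A) Bᶜ := disjoint_compl_right.mono_left Finset.sdiff_subset
    calc ∑ i ∈ Aᶜ, f i ^ 2 ≤ ∑ i ∈ (B \ A) ∪ Bᶜ, f i ^ 2 :=
          Finset.sum_le_sum_of_subset_of_nonneg hsubU (fun i _ _ => by positivity)
      _ = (∑ i ∈ B \ A, f i ^ 2) + ∑ i ∈ Bᶜ, f i ^ 2 := Finset.sum_union hdisj
  have hsq : ∑ i, (f i - yhat i) ^ 2 ≤ 9 * (k:ℝ) * E ^ 2 + 3 * D ^ 2 := by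
    rw [hsplit]; linarith
  have hkE : Real.sqrt (k:ℝ) * Real.sqrt (k:ℝ) = (k:ℝ) := Real.mul_self_sqrt (Nat.cast_nonneg k)
  have hkE0 : 0 ≤ Real.sqrt (k:ℝ) := Real.sqrt_nonneg _
  have h1 : Real.sqrt (∑ i, (f i - yhat i) ^ 2) ≤ 3 * Real.sqrt (k:ℝ) * E + 2 * D := by
    rw [show 3 * Real.sqrt (k:ℝ) * E + 2 * D =
        Real.sqrt ((3 * Real.sqrt (k:ℝ) * E + 2 * D)^2) from (Real.sqrt_sq (by positivity)).symm]
    apply Real.sqrt_le_sqrt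
    nlinarith [hsq, hkE, hD0, hE, hkE0, Real.sq_sqrt (Nat.cast_nonneg k : (0:ℝ) ≤ (k:ℝ)),
      mul_nonneg (mul_nonneg hkE0 hE) hD0, sq_nonneg D]
  have h3 : 0 ≤ Real.sqrt (k:ℝ) * E := mul_nonneg hkE0 hE
  linarith
end

section
/- Let f ∈ ℝ^n be a fixed vector, let k ≥ 1, let h : [n] → [k] be 2-wise independent and g : [n] → {−1, +1} be 4-wise independent, with h and g independent. Define R ∈ ℝ^k by R_j = Σ_{i : h(i)=j} g(i) f_i. Then E[ Σ_{j=1}^k R_j² ] = ‖f‖₂², and Var( Σ_{j=1}^k R_j² ) = 2(‖f‖₂⁴ − ‖f‖₄⁴)/k. -/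
open Finset
open scoped Classical

section CsAux

variable {Ω : Type} [Fintype Ω]
variable (μ : PMF Ω) (Pr : (Ω → Prop) → ℝ) (E : (Ω → ℝ) → ℝ)

theorem cs_pr_congr (hPr : ∀ P, Pr P = ∑ ω ∈ Finset.univ.filter P, (μ ω).toReal)
    (P Q : Ω → Prop) (h : ∀ ω, P ω ↔ Q ω) : Pr P = Pr Q := by
  rw [hPr, hPr]
  congr 1
  exact Finset.filter_congr (fun ω _ => by simpa using h ω)

theorem cs_e_ind (hPr : ∀ P, Pr P = ∑ ω ∈ Finset.univ.filter P, (μ ω).toReal)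
    (hE : ∀ Y, E Y = ∑ ω : Ω, (μ ω).toReal * Y ω)
    (P : Ω → Prop) (c : ℝ) :
    E (fun ω => if P ω then c else 0) = c * Pr P := by
  rw [hE, hPr, Finset.sum_filter, Finset.mul_sum]
  apply Finset.sum_congr rfl
  intro ω _
  by_cases h : P ω <;> simp [h, mul_comm]

theorem cs_e_ind2 (hPr : ∀ P, Pr P = ∑ ω ∈ Finset.univ.filter P, (μ ω).toReal)
    (hE : ∀ Y, E Y = ∑ ω : Ω, (μ ω).toReal * Y ω)
    (A₁ A₂ : Ω → Prop) (c : ℝ) :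
    E (fun ω => (if A₁ ω then c else 0) * (if A₂ ω then 1 else 0)) =
      c * Pr (fun ω => A₁ ω ∧ A₂ ω) := by
  rw [hE, hPr, Finset.sum_filter, Finset.mul_sum]
  apply Finset.sum_congr rfl
  intro ω _
  by_cases h1 : A₁ ω <;> by_cases h2 : A₂ ω <;> simp [h1, h2, mul_comm]

theorem cs_e_const (hE : ∀ Y, E Y = ∑ ω : Ω, (μ ω).toReal * Y ω)
    (mass : ∑ ω : Ω, (μ ω).toReal = 1) (c : ℝ) : E (fun _ => c) = c := by
  rw [hE, ← Finset.sum_mul, mass, one_mul]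

theorem cs_e_sum (hE : ∀ Y, E Y = ∑ ω : Ω, (μ ω).toReal * Y ω)
    {ι : Type} [Fintype ι] (F : ι → Ω → ℝ) :
    E (fun ω => ∑ x : ι, F x ω) = ∑ x, E (F x) := by
  rw [hE]
  simp_rw [Finset.mul_sum]
  rw [Finset.sum_comm]
  exact Finset.sum_congr rfl (fun x _ => (hE (F x)).symm)

theorem cs_e_lin (hE : ∀ Y, E Y = ∑ ω : Ω, (μ ω).toReal * Y ω)
    (X Y : Ω → ℝ) : E (fun ω => 2 * X ω - Y ω) = 2 * E X - E Y := by
  simp only [hE, mul_sub]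
  rw [Finset.sum_sub_distrib, Finset.mul_sum]
  congr 1
  apply Finset.sum_congr rfl
  intros; ring

theorem cs_part (hPr : ∀ P, Pr P = ∑ ω ∈ Finset.univ.filter P, (μ ω).toReal)
    {ι : Type} [Fintype ι] (P : Ω → Prop) (Pc : ι → Ω → Prop)
    (hex : ∀ ω, P ω ↔ ∃ c, Pc c ω)
    (huniq : ∀ c c' ω, Pc c ω → Pc c' ω → c = c') :
    Pr P = ∑ c : ι, Pr (Pc c) := by
  simp only [hPr, Finset.sum_filter]
  conv_rhs => rw [Finset.sum_comm]
  apply Finset.sum_congr rfl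
  intro ω _
  by_cases hP : P ω
  · rw [if_pos hP]
    obtain ⟨c0, hc0⟩ := (hex ω).1 hP
    rw [Finset.sum_eq_single c0]
    · rw [if_pos hc0]
    · intro c _ hne; rw [if_neg (fun hc => hne (huniq c c0 ω hc hc0))]
    · intro h; exact absurd (Finset.mem_univ c0) h
  · rw [if_neg hP]
    symm
    apply Finset.sum_eq_zero
    intro c _
    rw [if_neg (fun hc => hP ((hex ω).2 ⟨c, hc⟩))]

end CsAux

set_option maxHeartbeats 1000000 in
/-- Moments of one row of Countsketch: with a pairwise-independent hash `h : [n] → [k]` and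
4-wise independent uniform signs `g`, independent of each other,
`E[Σ_j R_j²] = ‖f‖₂²` and `Var(Σ_j R_j²) = 2(‖f‖₂⁴ - ‖f‖₄⁴)/k`. -/
theorem stmt_7 (n k : ℕ) (hk : 0 < k) (f : Fin n → ℝ)
    (μ : PMF ((Fin n → Fin k) × (Fin n → Bool)))
    (Pr : (((Fin n → Fin k) × (Fin n → Bool)) → Prop) → ℝ)
    (hPr : ∀ P, Pr P = ∑ ω ∈ Finset.univ.filter P, (μ ω).toReal)
    (hindep : ∀ (A : (Fin n → Fin k) → Prop) (B : (Fin n → Bool) → Prop),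
      Pr (fun ω => A ω.1 ∧ B ω.2) = Pr (fun ω => A ω.1) * Pr (fun ω => B ω.2))
    (hh : ∀ (T : Finset (Fin n)), T.card ≤ 2 → ∀ σ : Fin n → Fin k,
      Pr (fun ω => ∀ i ∈ T, ω.1 i = σ i) = (1 / (k : ℝ)) ^ T.card)
    (hg : ∀ (T : Finset (Fin n)), T.card ≤ 4 → ∀ σ : Fin n → Bool,
      Pr (fun ω => ∀ i ∈ T, ω.2 i = σ i) = (1 / 2 : ℝ) ^ T.card)
    (R : ((Fin n → Fin k) × (Fin n → Bool)) → Fin k → ℝ)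
    (hR : ∀ ω j, R ω j = ∑ i ∈ Finset.univ.filter (fun i => ω.1 i = j),
      (if ω.2 i then (1:ℝ) else -1) * f i)
    (E : (((Fin n → Fin k) × (Fin n → Bool)) → ℝ) → ℝ)
    (hE : ∀ Y, E Y = ∑ ω : (Fin n → Fin k) × (Fin n → Bool), (μ ω).toReal * Y ω) :
    E (fun ω => ∑ j : Fin k, (R ω j) ^ 2) = ∑ i, (f i) ^ 2 ∧
      E (fun ω => (∑ j : Fin k, (R ω j) ^ 2) ^ 2) -
          (E (fun ω => ∑ j : Fin k, (R ω j) ^ 2)) ^ 2 =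
        2 * ((∑ i, (f i) ^ 2) ^ 2 - ∑ i, (f i) ^ 4) / k := by
  classical
  have Pr_congr := cs_pr_congr μ Pr hPr
  have E_ind := cs_e_ind μ Pr E hPr hE
  have mass : ∑ ω : (Fin n → Fin k) × (Fin n → Bool), (μ ω).toReal = 1 := by
    have h0 := hg ∅ (by simp) (fun _ => false)
    rw [hPr] at h0
    simpa using h0
  have E_const := cs_e_const μ E hE mass
  have E_lin := cs_e_lin μ E hE
  have Pr_true : Pr (fun _ => True) = 1 := by
    rw [hPr]; simpa using mass
  -- ### bool lemmas
  have bA : ∀ x y z : Bool, ((x = y) ↔ (x = z)) ↔ (y = z) := by decide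
  have bB : ∀ x y z : Bool, ((x = y) ↔ (y = z)) ↔ (x = z) := by decide
  have bC : ∀ x y z : Bool, ((x = y) ↔ (z = x)) ↔ (y = z) := by decide
  have bD : ∀ x y z : Bool, ((x = y) ↔ (z = y)) ↔ (x = z) := by decide
  -- ### event probabilities
  have Lh2 : ∀ i j : Fin n, i ≠ j → Pr (fun ω => ω.1 i = ω.1 j) = 1 / k := by
    intro i j hij
    rw [cs_part μ Pr hPr (fun ω => ω.1 i = ω.1 j) (fun c ω => ω.1 i = c ∧ ω.1 j = c)
      (fun ω => ⟨fun h => ⟨ω.1 i, rfl, h.symm⟩, fun ⟨c, h1, h2⟩ => h1.trans h2.symm⟩)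
      (fun c c' ω h h' => h.1.symm.trans h'.1)]
    have hc : ∀ c : Fin k, Pr (fun ω => ω.1 i = c ∧ ω.1 j = c) = (1 / (k:ℝ)) ^ 2 := by
      intro c
      have hcard : ({i, j} : Finset (Fin n)).card = 2 := by
        rw [Finset.card_insert_of_notMem (by simpa using hij), Finset.card_singleton]
      have h2 := hh {i, j} (le_of_eq hcard) (fun _ => c)
      rw [hcard] at h2
      rw [← h2]
      apply Pr_congr
      intro ω; simp
    simp only [hc]
    rw [Finset.sum_const, Finset.card_univ, Fintype.card_fin, nsmul_eq_mul]
    have hk' : (k : ℝ) ≠ 0 := Nat.cast_ne_zero.mpr hk.ne'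
    field_simp
  have Lg2 : ∀ p q : Fin n, p ≠ q → Pr (fun ω => ω.2 p = ω.2 q) = 1 / 2 := by
    intro p q hpq
    rw [cs_part μ Pr hPr (fun ω => ω.2 p = ω.2 q) (fun b ω => ω.2 p = b ∧ ω.2 q = b)
      (fun ω => ⟨fun h => ⟨ω.2 p, rfl, h.symm⟩, fun ⟨c, h1, h2⟩ => h1.trans h2.symm⟩)
      (fun c c' ω h h' => h.1.symm.trans h'.1)]
    have hc : ∀ b : Bool, Pr (fun ω => ω.2 p = b ∧ ω.2 q = b) = (1 / (2:ℝ)) ^ 2 := by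
      intro b
      have hcard : ({p, q} : Finset (Fin n)).card = 2 := by
        rw [Finset.card_insert_of_notMem (by simpa using hpq), Finset.card_singleton]
      have h2 := hg {p, q} (by omega) (fun _ => b)
      rw [hcard] at h2
      rw [← h2]
      apply Pr_congr
      intro ω; simp
    simp only [hc]
    rw [Fintype.sum_bool]
    norm_num
  have Lg4 : ∀ a b c d : Fin n, a ≠ b → a ≠ c → a ≠ d → b ≠ c → b ≠ d → c ≠ d →
      Pr (fun ω => ((ω.2 a = ω.2 b) ↔ (ω.2 c = ω.2 d))) = 1 / 2 := by
    intro a b c d hab hac had hbc hbd hcd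
    rw [cs_part μ Pr hPr (fun ω => ((ω.2 a = ω.2 b) ↔ (ω.2 c = ω.2 d)))
      (fun (v : Bool × Bool × Bool × Bool) ω =>
        (ω.2 a = v.1 ∧ ω.2 b = v.2.1 ∧ ω.2 c = v.2.2.1 ∧ ω.2 d = v.2.2.2) ∧
          ((v.1 = v.2.1) ↔ (v.2.2.1 = v.2.2.2)))
      (fun ω => ⟨fun h => ⟨(ω.2 a, ω.2 b, ω.2 c, ω.2 d), ⟨rfl, rfl, rfl, rfl⟩, h⟩,
        fun ⟨v, ⟨h1, h2, h3, h4⟩, h5⟩ => by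
          show ω.2 a = ω.2 b ↔ ω.2 c = ω.2 d
          rw [h1, h2, h3, h4]; exact h5⟩)
      (fun v v' ω h h' => by
        obtain ⟨⟨e1, e2, e3, e4⟩, -⟩ := h
        obtain ⟨⟨g1, g2, g3, g4⟩, -⟩ := h'
        obtain ⟨va, vb, vc, vd⟩ := v
        obtain ⟨wa, wb, wc, wd⟩ := v'
        simp_all)]
    have hval : ∀ v : Bool × Bool × Bool × Bool,
        Pr (fun ω => (ω.2 a = v.1 ∧ ω.2 b = v.2.1 ∧ ω.2 c = v.2.2.1 ∧ ω.2 d = v.2.2.2) ∧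
          ((v.1 = v.2.1) ↔ (v.2.2.1 = v.2.2.2))) =
        if ((v.1 = v.2.1) ↔ (v.2.2.1 = v.2.2.2)) then (1/2:ℝ)^4 else 0 := by
      intro v
      by_cases hgood : ((v.1 = v.2.1) ↔ (v.2.2.1 = v.2.2.2))
      · rw [if_pos hgood]
        have hcard : ({a, b, c, d} : Finset (Fin n)).card = 4 := by
          rw [Finset.card_insert_of_notMem (by simp [hab, hac, had]),
              Finset.card_insert_of_notMem (by simp [hbc, hbd]),
              Finset.card_insert_of_notMem (by simp [hcd]), Finset.card_singleton]
        set σ : Fin n → Bool := fun x =>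
          if x = a then v.1 else if x = b then v.2.1 else if x = c then v.2.2.1 else v.2.2.2
          with hσ
        have sa : σ a = v.1 := by rw [hσ]; simp
        have sb : σ b = v.2.1 := by rw [hσ]; simp [Ne.symm hab]
        have sc : σ c = v.2.2.1 := by rw [hσ]; simp [Ne.symm hac, Ne.symm hbc]
        have sd : σ d = v.2.2.2 := by rw [hσ]; simp [Ne.symm had, Ne.symm hbd, Ne.symm hcd]
        have h4 := hg {a, b, c, d} (le_of_eq hcard) σ
        rw [hcard] at h4
        rw [← h4]
        apply Pr_congr
        intro ω
        simp only [Finset.mem_insert, Finset.mem_singleton, forall_eq_or_imp, forall_eq,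
          sa, sb, sc, sd]
        tauto
      · rw [if_neg hgood]
        rw [Pr_congr _ (fun _ => False) (fun ω => ⟨fun h => hgood h.2, False.elim⟩)]
        rw [hPr]; simp
    simp only [hval]
    rw [Fintype.sum_prod_type]
    simp only [Fintype.sum_prod_type, Fintype.sum_bool]
    norm_num
  -- ### factorization of expectations
  have Lfact : ∀ (A : (Fin n → Fin k) → Prop) (B : (Fin n → Bool) → Prop) (c : ℝ)
      (X : ((Fin n → Fin k) × (Fin n → Bool)) → ℝ),
      (∀ ω, A ω.1 → B ω.2 → X ω = c) →
      (∀ ω, A ω.1 → ¬ B ω.2 → X ω = -c) →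
      (∀ ω, ¬ A ω.1 → X ω = 0) →
      E X = c * Pr (fun ω => A ω.1) * (2 * Pr (fun ω => B ω.2) - 1) := by
    intro A B c X h1 h2 h3
    have key : X = fun ω =>
        2 * ((if A ω.1 then c else 0) * (if B ω.2 then 1 else 0)) - (if A ω.1 then c else 0) := by
      funext ω
      by_cases hA : A ω.1
      · by_cases hB : B ω.2
        · rw [h1 ω hA hB, if_pos hA, if_pos hB]; ring
        · rw [h2 ω hA hB, if_pos hA, if_neg hB]; ring
      · rw [h3 ω hA, if_neg hA]; ring
    have hprod : E (fun ω => (if A ω.1 then c else 0) * (if B ω.2 then 1 else 0)) =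
        c * Pr (fun ω => A ω.1 ∧ B ω.2) :=
      cs_e_ind2 μ Pr E hPr hE (fun ω => A ω.1) (fun ω => B ω.2) c
    have hone : E (fun ω => if A ω.1 then c else 0) = c * Pr (fun ω => A ω.1) :=
      E_ind (fun ω => A ω.1) c
    rw [key, E_lin, hprod, hone, hindep]
    ring
  -- ### the quadratic form
  set s : ((Fin n → Fin k) × (Fin n → Bool)) → Fin n → ℝ :=
    fun ω i => (if ω.2 i then (1:ℝ) else -1) * f i with hs
  set T : Fin n → Fin n → ((Fin n → Fin k) × (Fin n → Bool)) → ℝ :=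
    fun i1 i2 ω => if ω.1 i1 = ω.1 i2 then s ω i1 * s ω i2 else 0 with hT
  have stepA : ∀ ω, ∑ j : Fin k, (R ω j) ^ 2 = ∑ i1, ∑ i2, T i1 i2 ω := by
    intro ω
    simp only [hT, hs]
    have hRj : ∀ j, R ω j = ∑ i : Fin n,
        if ω.1 i = j then (if ω.2 i then (1:ℝ) else -1) * f i else 0 := by
      intro j; rw [hR, Finset.sum_filter]
    simp only [hRj, pow_two, Finset.sum_mul_sum]
    rw [Finset.sum_comm]
    apply Finset.sum_congr rfl
    intro i1 _
    rw [Finset.sum_comm]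
    apply Finset.sum_congr rfl
    intro i2 _
    have hj : ∀ j : Fin k,
        (if ω.1 i1 = j then (if ω.2 i1 then (1:ℝ) else -1) * f i1 else 0) *
          (if ω.1 i2 = j then (if ω.2 i2 then (1:ℝ) else -1) * f i2 else 0) =
        if ω.1 i1 = j then
          (if ω.1 i1 = ω.1 i2 then
            ((if ω.2 i1 then (1:ℝ) else -1) * f i1) * ((if ω.2 i2 then (1:ℝ) else -1) * f i2)
          else 0) else 0 := by
      intro j
      by_cases h1 : ω.1 i1 = j
      · subst h1
        by_cases h2 : ω.1 i1 = ω.1 i2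
        · simp only [if_pos (show ω.1 i1 = ω.1 i1 from rfl), if_pos h2, if_pos h2.symm]
          simp
        · simp only [if_pos (show ω.1 i1 = ω.1 i1 from rfl), if_neg h2,
            if_neg (show ¬ ω.1 i2 = ω.1 i1 from fun h => h2 h.symm), mul_zero]
          simp
      · rw [if_neg h1, zero_mul, if_neg h1]
    simp only [hj]
    rw [Finset.sum_ite_eq]
    simp
  have ET : ∀ i1 i2, E (T i1 i2) = if i1 = i2 then f i1 ^ 2 else 0 := by
    intro i1 i2
    by_cases h : i1 = i2
    · subst h
      rw [if_pos rfl]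
      have hpt : T i1 i1 = fun _ => f i1 ^ 2 := by
        funext ω
        show (if ω.1 i1 = ω.1 i1 then s ω i1 * s ω i1 else 0) = f i1 ^ 2
        rw [if_pos rfl, hs]
        cases hb : ω.2 i1 <;> simp [hb] <;> ring
      rw [hpt, E_const]
    · rw [if_neg h]
      have hval := Lfact (fun hf => hf i1 = hf i2) (fun g => g i1 = g i2)
        (f i1 * f i2) (T i1 i2)
        (by
          intro ω hA hB
          have hB' : ω.2 i1 = ω.2 i2 := hB
          simp only [hT, hs]
          rw [if_pos hA]
          cases hb1 : ω.2 i1 <;> cases hb2 : ω.2 i2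
          · simp [hb1, hb2] <;> ring
          · exact absurd (hb1.symm.trans (hB'.trans hb2)) (by decide)
          · exact absurd (hb1.symm.trans (hB'.trans hb2)) (by decide)
          · simp [hb1, hb2] <;> ring)
        (by
          intro ω hA hB
          have hB' : ¬ ω.2 i1 = ω.2 i2 := hB
          simp only [hT, hs]
          rw [if_pos hA]
          cases hb1 : ω.2 i1 <;> cases hb2 : ω.2 i2
          · exact absurd (hb1.trans hb2.symm) hB'
          · simp [hb1, hb2] <;> ring
          · simp [hb1, hb2] <;> ring
          · exact absurd (hb1.trans hb2.symm) hB')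
        (by
          intro ω hA
          simp only [hT, hs]
          rw [if_neg hA])
      rw [hval, Lg2 i1 i2 h]
      ring
  have first : E (fun ω => ∑ j : Fin k, (R ω j) ^ 2) = ∑ i, (f i) ^ 2 := by
    have h1 : (fun ω : (Fin n → Fin k) × (Fin n → Bool) => ∑ j : Fin k, (R ω j) ^ 2) =
        fun ω => ∑ i1, ∑ i2, T i1 i2 ω := funext stepA
    rw [h1, cs_e_sum μ E hE _]
    have h2 : ∀ i1 : Fin n, E (fun ω => ∑ i2, T i1 i2 ω) = ∑ i2, E (T i1 i2) :=
      fun i1 => cs_e_sum μ E hE _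
    simp only [h2, ET]
    simp
  refine ⟨first, ?_⟩
  have ETT : ∀ i1 i2 i3 i4, E (fun ω => T i1 i2 ω * T i3 i4 ω) =
      (if i1 = i2 ∧ i3 = i4 then f i1 ^ 2 * f i3 ^ 2 else 0)
      + (if ¬ i1 = i2 ∧ i3 = i1 ∧ i4 = i2 then f i1 ^ 2 * f i2 ^ 2 / k else 0)
      + (if ¬ i1 = i2 ∧ i3 = i2 ∧ i4 = i1 then f i1 ^ 2 * f i2 ^ 2 / k else 0) := by
    intro i1 i2 i3 i4
    have hE4 := Lfact (fun hf => hf i1 = hf i2 ∧ hf i3 = hf i4)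
      (fun g => ((g i1 = g i2) ↔ (g i3 = g i4)))
      (f i1 * f i2 * (f i3 * f i4)) (fun ω => T i1 i2 ω * T i3 i4 ω)
      (by
        intro ω hA hB
        have hB' : (ω.2 i1 = ω.2 i2) ↔ (ω.2 i3 = ω.2 i4) := hB
        simp only [hT, hs]
        rw [if_pos hA.1, if_pos hA.2]
        cases hb1 : ω.2 i1 <;> cases hb2 : ω.2 i2 <;> cases hb3 : ω.2 i3 <;>
          cases hb4 : ω.2 i4 <;> rw [hb1, hb2, hb3, hb4] at hB' <;>
          first
            | exact absurd hB' (by decide)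
            | (simp [hb1, hb2, hb3, hb4] <;> ring))
      (by
        intro ω hA hB
        have hB' : ¬ ((ω.2 i1 = ω.2 i2) ↔ (ω.2 i3 = ω.2 i4)) := hB
        simp only [hT, hs]
        rw [if_pos hA.1, if_pos hA.2]
        cases hb1 : ω.2 i1 <;> cases hb2 : ω.2 i2 <;> cases hb3 : ω.2 i3 <;>
          cases hb4 : ω.2 i4 <;> rw [hb1, hb2, hb3, hb4] at hB' <;>
          first
            | exact absurd (by decide) hB'
            | (simp [hb1, hb2, hb3, hb4] <;> ring))
      (by
        intro ω hA
        simp only [hT, hs]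
        by_cases h1 : ω.1 i1 = ω.1 i2
        · have h2 : ¬ ω.1 i3 = ω.1 i4 := fun h2 => hA ⟨h1, h2⟩
          rw [if_neg h2, mul_zero]
        · rw [if_neg h1, zero_mul])
    rw [hE4]
    by_cases h12 : i1 = i2
    · subst h12
      by_cases h34 : i3 = i4
      · subst h34
        rw [show Pr (fun ω => ω.1 i1 = ω.1 i1 ∧ ω.1 i3 = ω.1 i3) = 1 from
            (Pr_congr _ _ (by simp)).trans Pr_true,
          show Pr (fun ω => ((ω.2 i1 = ω.2 i1) ↔ (ω.2 i3 = ω.2 i3))) = 1 from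
            (Pr_congr _ _ (by simp)).trans Pr_true]
        rw [if_pos (show i1 = i1 ∧ i3 = i3 from ⟨rfl, rfl⟩),
          if_neg (show ¬(¬i1 = i1 ∧ i3 = i1 ∧ i3 = i1) from fun h => h.1 rfl)]
        ring
      · rw [show Pr (fun ω => ((ω.2 i1 = ω.2 i1) ↔ (ω.2 i3 = ω.2 i4))) = 1/2 from
            (Pr_congr _ _ (by intro ω; simp)).trans (Lg2 i3 i4 h34)]
        rw [if_neg (show ¬(i1 = i1 ∧ i3 = i4) from fun h => h34 h.2),
          if_neg (show ¬(¬i1 = i1 ∧ i3 = i1 ∧ i4 = i1) from fun h => h.1 rfl)]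
        ring
    · by_cases h34 : i3 = i4
      · subst h34
        rw [show Pr (fun ω => ((ω.2 i1 = ω.2 i2) ↔ (ω.2 i3 = ω.2 i3))) = 1/2 from
            (Pr_congr _ _ (by intro ω; simp)).trans (Lg2 i1 i2 h12)]
        rw [if_neg (show ¬(i1 = i2 ∧ i3 = i3) from fun h => h12 h.1),
          if_neg (show ¬(¬i1 = i2 ∧ i3 = i1 ∧ i3 = i2) from
            fun h => h12 (h.2.1.symm.trans h.2.2)),
          if_neg (show ¬(¬i1 = i2 ∧ i3 = i2 ∧ i3 = i1) from
            fun h => h12 (h.2.2.symm.trans h.2.1))]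
        ring
      · by_cases hc1 : i3 = i1 ∧ i4 = i2
        · obtain ⟨e3, e4⟩ := hc1
          rw [show Pr (fun ω => ω.1 i1 = ω.1 i2 ∧ ω.1 i3 = ω.1 i4) = 1/k from
              (Pr_congr _ _ (by intro ω; rw [e3, e4]; exact and_self_iff)).trans
                (Lh2 i1 i2 h12),
            show Pr (fun ω => ((ω.2 i1 = ω.2 i2) ↔ (ω.2 i3 = ω.2 i4))) = 1 from
              (Pr_congr _ _ (by intro ω; rw [e3, e4]; simp)).trans Pr_true]
          rw [if_neg (show ¬(i1 = i2 ∧ i3 = i4) from fun h => h12 h.1),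
            if_pos (show ¬i1 = i2 ∧ i3 = i1 ∧ i4 = i2 from ⟨h12, e3, e4⟩),
            if_neg (show ¬(¬i1 = i2 ∧ i3 = i2 ∧ i4 = i1) from
              fun h => h12 (e3.symm.trans h.2.1))]
          rw [e3, e4]
          ring
        · by_cases hc2 : i3 = i2 ∧ i4 = i1
          · obtain ⟨e3, e4⟩ := hc2
            rw [show Pr (fun ω => ω.1 i1 = ω.1 i2 ∧ ω.1 i3 = ω.1 i4) = 1/k from
                (Pr_congr _ _ (by
                  intro ω; rw [e3, e4]
                  exact ⟨fun h => h.1, fun h => ⟨h, h.symm⟩⟩)).trans (Lh2 i1 i2 h12),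
              show Pr (fun ω => ((ω.2 i1 = ω.2 i2) ↔ (ω.2 i3 = ω.2 i4))) = 1 from
                (Pr_congr _ _ (by intro ω; rw [e3, e4]; simp [eq_comm])).trans Pr_true]
            rw [if_neg (show ¬(i1 = i2 ∧ i3 = i4) from fun h => h12 h.1),
              if_neg (show ¬(¬i1 = i2 ∧ i3 = i1 ∧ i4 = i2) from
                fun h => h12 (h.2.1.symm.trans e3)),
              if_pos (show ¬i1 = i2 ∧ i3 = i2 ∧ i4 = i1 from ⟨h12, e3, e4⟩)]
            rw [e3, e4]
            ring
          · have hPrB : Pr (fun ω => ((ω.2 i1 = ω.2 i2) ↔ (ω.2 i3 = ω.2 i4))) = 1/2 := by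
              by_cases e31 : i3 = i1
              · subst e31
                have h42 : i4 ≠ i2 := fun e => hc1 ⟨rfl, e⟩
                exact (Pr_congr _ _ (fun ω => bA (ω.2 i3) (ω.2 i2) (ω.2 i4))).trans
                  (Lg2 i2 i4 (fun e => h42 e.symm))
              · by_cases e32 : i3 = i2
                · subst e32
                  have h41 : i4 ≠ i1 := fun e => hc2 ⟨rfl, e⟩
                  exact (Pr_congr _ _ (fun ω => bB (ω.2 i1) (ω.2 i3) (ω.2 i4))).trans
                    (Lg2 i1 i4 (fun e => h41 e.symm))
                · by_cases e41 : i4 = i1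
                  · subst e41
                    exact (Pr_congr _ _ (fun ω => bC (ω.2 i4) (ω.2 i2) (ω.2 i3))).trans
                      (Lg2 i2 i3 (fun e => e32 e.symm))
                  · by_cases e42 : i4 = i2
                    · subst e42
                      exact (Pr_congr _ _ (fun ω => bD (ω.2 i1) (ω.2 i4) (ω.2 i3))).trans
                        (Lg2 i1 i3 (fun e => e31 e.symm))
                    · exact Lg4 i1 i2 i3 i4 h12 (fun e => e31 e.symm) (fun e => e41 e.symm)
                        (fun e => e32 e.symm) (fun e => e42 e.symm) h34
            rw [hPrB]
            rw [if_neg (show ¬(i1 = i2 ∧ i3 = i4) from fun h => h12 h.1),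
              if_neg (show ¬(¬i1 = i2 ∧ i3 = i1 ∧ i4 = i2) from fun h => hc1 h.2),
              if_neg (show ¬(¬i1 = i2 ∧ i3 = i2 ∧ i4 = i1) from fun h => hc2 h.2)]
            ring
  have stepC : ∀ ω, (∑ j : Fin k, (R ω j) ^ 2) ^ 2 =
      ∑ i1, ∑ i2, ∑ i3, ∑ i4, T i1 i2 ω * T i3 i4 ω := by
    intro ω
    rw [stepA, pow_two, Finset.sum_mul_sum]
    apply Finset.sum_congr rfl
    intro i1 _
    simp_rw [Finset.sum_mul, Finset.mul_sum]
    rw [Finset.sum_comm]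
  have second : E (fun ω => (∑ j : Fin k, (R ω j) ^ 2) ^ 2) =
      (∑ i, (f i) ^ 2) ^ 2 + 2 * ((∑ i, (f i) ^ 2) ^ 2 - ∑ i, (f i) ^ 4) / k := by
    have h1 : (fun ω : (Fin n → Fin k) × (Fin n → Bool) => (∑ j : Fin k, (R ω j) ^ 2) ^ 2) =
        fun ω => ∑ i1, ∑ i2, ∑ i3, ∑ i4, T i1 i2 ω * T i3 i4 ω := funext stepC
    rw [h1, cs_e_sum μ E hE _]
    have h2 : ∀ i1 : Fin n, E (fun ω => ∑ i2, ∑ i3, ∑ i4, T i1 i2 ω * T i3 i4 ω)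
        = ∑ i2, ∑ i3, ∑ i4, E (fun ω => T i1 i2 ω * T i3 i4 ω) := by
      intro i1
      rw [cs_e_sum μ E hE _]
      refine Finset.sum_congr rfl fun i2 _ => ?_
      rw [cs_e_sum μ E hE _]
      refine Finset.sum_congr rfl fun i3 _ => ?_
      rw [cs_e_sum μ E hE _]
    simp only [h2, ETT]
    simp only [Finset.sum_add_distrib]
    have hS1 : ∀ i1 i2 : Fin n,
        (∑ i3, ∑ i4, if i1 = i2 ∧ i3 = i4 then f i1 ^ 2 * f i3 ^ 2 else 0)
          = if i1 = i2 then (∑ i3, f i1 ^ 2 * f i3 ^ 2) else 0 := by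
      intro i1 i2
      by_cases h : i1 = i2 <;> simp [h]
    have hS2 : ∀ i1 i2 : Fin n,
        (∑ i3, ∑ i4, if ¬ i1 = i2 ∧ i3 = i1 ∧ i4 = i2 then f i1 ^ 2 * f i2 ^ 2 / k else 0)
          = if i1 = i2 then 0 else f i1 ^ 2 * f i2 ^ 2 / k := by
      intro i1 i2
      by_cases h : i1 = i2
      · simp [h]
      · have hb : ∀ i3 i4 : Fin n,
            (if ¬ i1 = i2 ∧ i3 = i1 ∧ i4 = i2 then f i1 ^ 2 * f i2 ^ 2 / k else 0)
              = if i4 = i2 then (if i3 = i1 then f i1 ^ 2 * f i2 ^ 2 / k else 0) else 0 := by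
          intro i3 i4
          by_cases h3 : i3 = i1 <;> by_cases h4 : i4 = i2 <;> simp [h, h3, h4]
        simp only [hb]
        simp [h]
    have hS3 : ∀ i1 i2 : Fin n,
        (∑ i3, ∑ i4, if ¬ i1 = i2 ∧ i3 = i2 ∧ i4 = i1 then f i1 ^ 2 * f i2 ^ 2 / k else 0)
          = if i1 = i2 then 0 else f i1 ^ 2 * f i2 ^ 2 / k := by
      intro i1 i2
      by_cases h : i1 = i2
      · simp [h]
      · have hb : ∀ i3 i4 : Fin n,
            (if ¬ i1 = i2 ∧ i3 = i2 ∧ i4 = i1 then f i1 ^ 2 * f i2 ^ 2 / k else 0)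
              = if i4 = i1 then (if i3 = i2 then f i1 ^ 2 * f i2 ^ 2 / k else 0) else 0 := by
          intro i3 i4
          by_cases h3 : i3 = i2 <;> by_cases h4 : i4 = i1 <;> simp [h, h3, h4]
        simp only [hb]
        simp [h]
    simp only [hS1, hS2, hS3]
    have sum_ite_ne : ∀ (c : Fin n → ℝ) (i1 : Fin n),
        (∑ i2, if i1 = i2 then 0 else c i2) = (∑ i2, c i2) - c i1 := by
      intro c i1
      have hb : ∀ i2, (if i1 = i2 then (0:ℝ) else c i2)
          = c i2 - (if i1 = i2 then c i2 else 0) := by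
        intro i2; by_cases h : i1 = i2 <;> simp [h]
      simp only [hb, Finset.sum_sub_distrib]
      simp
    have P1 : (∑ i1 : Fin n, ∑ i2 : Fin n,
        if i1 = i2 then (∑ i3 : Fin n, f i1 ^ 2 * f i3 ^ 2) else 0)
        = (∑ i, (f i) ^ 2) ^ 2 := by
      simp only [Finset.sum_ite_eq, Finset.mem_univ, if_true]
      rw [pow_two, Finset.sum_mul_sum]
    have P2 : (∑ i1 : Fin n, ∑ i2 : Fin n,
        if i1 = i2 then 0 else f i1 ^ 2 * f i2 ^ 2 / k)
        = ((∑ i, (f i) ^ 2) ^ 2 - ∑ i, (f i) ^ 4) / k := by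
      simp only [sum_ite_ne]
      rw [Finset.sum_sub_distrib]
      have e1 : (∑ i1 : Fin n, ∑ i2 : Fin n, f i1 ^ 2 * f i2 ^ 2 / (k:ℝ))
          = (∑ i, (f i) ^ 2) ^ 2 / k := by
        rw [pow_two, Finset.sum_mul_sum, Finset.sum_div]
        apply Finset.sum_congr rfl
        intros
        rw [Finset.sum_div]
      have e2 : (∑ i1 : Fin n, f i1 ^ 2 * f i1 ^ 2 / (k:ℝ)) = (∑ i, (f i) ^ 4) / k := by
        rw [← Finset.sum_div]
        congr 1
        apply Finset.sum_congr rfl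
        intros; ring
      rw [e1, e2]
      ring
    rw [P1, P2]
    ring
  rw [second, first]
  ring
end

section
/- Let f and g be the final frequency vectors of two streams on universe [n], with insertion/deletion decompositions f = f⁺ − f⁻ and g = g⁺ − g⁻, and set F = f⁺ + f⁻, G = g⁺ + g⁻. Suppose each update to f is sampled independently with probability p_f and each update to g independently with probability p_g; let f', g' be the resulting (unscaled) sampled vectors, independent of each other. Then E[⟨p_f^{-1} f', p_g^{-1} g'⟩] = ⟨f, g⟩ and Var(⟨p_f^{-1} f', p_g^{-1} g'⟩) ≤ Σ_{i=1}^n ( f_i² p_g^{-1} G_i + g_i² p_f^{-1} F_i + p_f^{-1} p_g^{-1} F_i G_i ). -/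
open MeasureTheory
open scoped ENNReal


open MeasureTheory
open scoped ENNReal

section PiAux

variable {ι : Type*} [Fintype ι] [DecidableEq ι] {E : ι → Type*} [∀ i, MeasurableSpace (E i)]
  (μ : (i : ι) → Measure (E i)) [∀ i, IsProbabilityMeasure (μ i)]

lemma aux_pi_prod (h : (i : ι) → E i → ℝ) :
    ∫ x, ∏ i, h i (x i) ∂Measure.pi μ = ∏ i, ∫ y, h i y ∂μ i := by
  letI : (i : ι) → MeasureSpace (E i) := fun i => ⟨μ i⟩
  haveI : ∀ i, SigmaFinite (volume : Measure (E i)) := fun i =>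
    inferInstanceAs (SigmaFinite (μ i))
  exact integral_fintype_prod_eq_prod h

lemma aux_pi_one (i : ι) (φ : E i → ℝ) :
    ∫ x, φ (x i) ∂Measure.pi μ = ∫ y, φ y ∂μ i := by
  have key := aux_pi_prod μ (Function.update (fun i (_ : E i) => (1:ℝ)) i φ)
  have h1 : ∀ x : (i : ι) → E i,
      ∏ i', Function.update (fun i (_ : E i) => (1:ℝ)) i φ i' (x i') = φ (x i) := by
    intro x
    rw [Finset.prod_eq_single i (fun b _ hb => by simp [Function.update_of_ne hb])
      (by simp), Function.update_self]
  have h2 : ∏ i', ∫ y, Function.update (fun i (_ : E i) => (1:ℝ)) i φ i' y ∂μ i'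
      = ∫ y, φ y ∂μ i := by
    rw [Finset.prod_eq_single i (fun b _ hb => by simp [Function.update_of_ne hb])
      (by simp), Function.update_self]
  simp only [h1] at key
  rw [key, h2]

lemma aux_pi_two (i k : ι) (hik : i ≠ k) (φ : E i → ℝ) (ψ : E k → ℝ) :
    ∫ x, φ (x i) * ψ (x k) ∂Measure.pi μ = (∫ y, φ y ∂μ i) * ∫ y, ψ y ∂μ k := by
  set D := Function.update (Function.update (fun i (_ : E i) => (1:ℝ)) i φ) k ψ with hD
  have hDi : D i = φ := by rw [hD, Function.update_of_ne hik, Function.update_self]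
  have hDk : D k = ψ := Function.update_self _ _ _
  have hDo : ∀ b, b ≠ i → b ≠ k → D b = fun _ => (1:ℝ) := by
    intro b h1 h2
    rw [hD, Function.update_of_ne h2, Function.update_of_ne h1]
  have key := aux_pi_prod μ D
  have h1 : ∀ x : (i : ι) → E i, ∏ i', D i' (x i') = φ (x i) * ψ (x k) := by
    intro x
    rw [← Finset.prod_subset (Finset.subset_univ ({i, k} : Finset ι))
      (fun b _ hb => by
        simp only [Finset.mem_insert, Finset.mem_singleton, not_or] at hb
        rw [hDo b hb.1 hb.2]),
      Finset.prod_pair hik, hDi, hDk]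
  have h2 : ∏ i', ∫ y, D i' y ∂μ i' = (∫ y, φ y ∂μ i) * ∫ y, ψ y ∂μ k := by
    rw [← Finset.prod_subset (Finset.subset_univ ({i, k} : Finset ι))
      (fun b _ hb => by
        simp only [Finset.mem_insert, Finset.mem_singleton, not_or] at hb
        rw [hDo b hb.1 hb.2]; simp),
      Finset.prod_pair hik, hDi, hDk]
  simp only [h1] at key
  rw [key, h2]

end PiAux

lemma bern_ind (p' : ℝ≥0∞) (hp1 : p' ≤ 1) :
    ∫ b, (if b then (1:ℝ) else 0) ∂(PMF.bernoulli p'.toNNReal (by simpa using ENNReal.toNNReal_mono ENNReal.one_ne_top hp1)).toMeasure = p'.toReal := by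
  rw [integral_fintype (hf := Integrable.of_finite)]
  rw [Fintype.sum_bool]
  simp [measureReal_def, PMF.toMeasure_apply_singleton _ _ (measurableSet_singleton _), PMF.bernoulli_apply]
  exact (congrArg ENNReal.toReal (PMF.bernoulli_apply _ true)).trans rfl

lemma sum_pm {m : ℕ} (s : Fin m → ℝ) (h : ∀ j, s j = 1 ∨ s j = -1) :
    ∑ j, s j = ((Finset.univ.filter (fun j => s j = 1)).card : ℝ)
      - ((Finset.univ.filter (fun j => s j = -1)).card : ℝ) := by
  rw [← Finset.sum_filter_add_sum_filter_not Finset.univ (fun j => s j = 1)]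
  have h2 : Finset.univ.filter (fun j => ¬ s j = 1) = Finset.univ.filter (fun j => s j = -1) := by
    ext j
    simp only [Finset.mem_filter, Finset.mem_univ, true_and]
    rcases h j with hj | hj <;> simp [hj] <;> norm_num
  rw [h2, Finset.sum_congr rfl (fun j hj => (Finset.mem_filter.mp hj).2),
    Finset.sum_congr rfl (fun j hj => (Finset.mem_filter.mp hj).2 : ∀ j ∈ Finset.univ.filter (fun j => s j = -1), s j = -1)]
  simp [Finset.sum_const]
  ring

lemma streamL1 {m : ℕ} (p' : ℝ≥0∞) (hp1 : p' ≤ 1) (s : Fin m → ℝ) :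
    ∫ y, (∑ j, s j * (if y j then (1:ℝ) else 0))
      ∂(Measure.pi fun _ : Fin m => (PMF.bernoulli p'.toNNReal (by simpa using ENNReal.toNNReal_mono ENNReal.one_ne_top hp1)).toMeasure)
      = p'.toReal * ∑ j, s j := by
  rw [integral_finset_sum _ (fun j _ => Integrable.of_finite)]
  have h1 : ∀ j : Fin m, ∫ y, s j * (if y j then (1:ℝ) else 0)
      ∂(Measure.pi fun _ : Fin m => (PMF.bernoulli p'.toNNReal (by simpa using ENNReal.toNNReal_mono ENNReal.one_ne_top hp1)).toMeasure) = s j * p'.toReal := by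
    intro j
    rw [integral_const_mul]
    have e : ∫ y, (if y j then (1:ℝ) else 0)
        ∂(Measure.pi fun _ : Fin m => (PMF.bernoulli p'.toNNReal (by simpa using ENNReal.toNNReal_mono ENNReal.one_ne_top hp1)).toMeasure) = p'.toReal :=
      (aux_pi_one (fun _ : Fin m => (PMF.bernoulli p'.toNNReal (by simpa using ENNReal.toNNReal_mono ENNReal.one_ne_top hp1)).toMeasure) j (fun b : Bool => if b then (1:ℝ) else 0)).trans (bern_ind p' hp1)
    rw [e]
  rw [Finset.sum_congr rfl (fun j _ => h1 j), ← Finset.sum_mul, mul_comm]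

lemma streamL2 {m : ℕ} (p' : ℝ≥0∞) (hp1 : p' ≤ 1) (s : Fin m → ℝ)
    (hs : ∀ j, s j = 1 ∨ s j = -1) :
    ∫ y, (∑ j, s j * (if y j then (1:ℝ) else 0))^2
      ∂(Measure.pi fun _ : Fin m => (PMF.bernoulli p'.toNNReal (by simpa using ENNReal.toNNReal_mono ENNReal.one_ne_top hp1)).toMeasure)
      = p'.toReal^2 * (∑ j, s j)^2 + (p'.toReal - p'.toReal^2) * m := by
  set P := p'.toReal with hP
  have hmeas : (Measure.pi fun _ : Fin m => (PMF.bernoulli p'.toNNReal (by simpa using ENNReal.toNNReal_mono ENNReal.one_ne_top hp1)).toMeasure) = (Measure.pi fun _ : Fin m => (PMF.bernoulli p'.toNNReal (by simpa using ENNReal.toNNReal_mono ENNReal.one_ne_top hp1)).toMeasure) := rfl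
  have hexp : ∀ y : Fin m → Bool, (∑ j, s j * (if y j then (1:ℝ) else 0))^2
      = ∑ j, ∑ l, (s j * s l) *
        ((if y j then (1:ℝ) else 0) * (if y l then (1:ℝ) else 0)) := by
    intro y
    rw [sq, Finset.sum_mul_sum]
    exact Finset.sum_congr rfl fun j _ => Finset.sum_congr rfl fun l _ => by ring
  simp only [hexp]
  rw [integral_finset_sum _ (fun j _ => Integrable.of_finite)]
  have hjl : ∀ j l : Fin m, ∫ y : Fin m → Bool, ((if y j then (1:ℝ) else 0) * (if y l then (1:ℝ) else 0)) ∂(Measure.pi fun _ : Fin m => (PMF.bernoulli p'.toNNReal (by simpa using ENNReal.toNNReal_mono ENNReal.one_ne_top hp1)).toMeasure)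
      = if j = l then P else P^2 := by
    intro j l
    by_cases h : j = l
    · subst h
      rw [if_pos rfl]
      have e1 : ∀ y : Fin m → Bool, ((if y j then (1:ℝ) else 0) * (if y j then (1:ℝ) else 0))
          = (if y j then (1:ℝ) else 0) := by
        intro y; by_cases hb : y j <;> simp [hb]
      simp only [e1]
      exact (aux_pi_one (fun _ : Fin m => (PMF.bernoulli p'.toNNReal (by simpa using ENNReal.toNNReal_mono ENNReal.one_ne_top hp1)).toMeasure) j (fun b : Bool => if b then (1:ℝ) else 0)).trans (bern_ind p' hp1)
    · rw [if_neg h]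
      have e2 := aux_pi_two (fun _ : Fin m => (PMF.bernoulli p'.toNNReal (by simpa using ENNReal.toNNReal_mono ENNReal.one_ne_top hp1)).toMeasure) j l h
        (fun b => if b then (1:ℝ) else 0) (fun b => if b then (1:ℝ) else 0)
      rw [bern_ind p' hp1, ← hP, ← sq] at e2
      exact e2
  have hterm : ∀ j : Fin m, ∫ y : Fin m → Bool, ∑ l, (s j * s l) *
      ((if y j then (1:ℝ) else 0) * (if y l then (1:ℝ) else 0)) ∂(Measure.pi fun _ : Fin m => (PMF.bernoulli p'.toNNReal (by simpa using ENNReal.toNNReal_mono ENNReal.one_ne_top hp1)).toMeasure)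
      = ∑ l, (s j * s l) * (if j = l then P else P^2) := by
    intro j
    rw [integral_finset_sum _ (fun l _ => Integrable.of_finite)]
    exact Finset.sum_congr rfl fun l _ => by rw [integral_const_mul, hjl j l]
  rw [Finset.sum_congr rfl (fun j _ => hterm j)]
  have hsq1 : ∀ j, s j * s j = 1 := by
    intro j; rcases hs j with h | h <;> rw [h] <;> norm_num
  have hm : ∑ j : Fin m, s j * s j = m := by
    rw [Finset.sum_congr rfl (fun j _ => hsq1 j)]; simp
  have split : ∀ j l : Fin m, (s j * s l) * (if j = l then P else P^2)
      = P^2 * (s j * s l) + (if j = l then (P - P^2) * (s j * s l) else 0) := by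
    intro j l; by_cases h : j = l <;> simp [h] <;> ring
  simp only [split]
  simp only [Finset.sum_add_distrib, Finset.sum_ite_eq, Finset.mem_univ, if_true,
    ← Finset.mul_sum]
  rw [← Finset.sum_mul, hm, ← sq]

lemma liftMean {n : ℕ} {F : Fin n → ℕ} (p' : ℝ≥0∞) (hp1 : p' ≤ 1)
    (σ : (i : Fin n) → Fin (F i) → ℝ) (i : Fin n) :
    ∫ a : (i : Fin n) → Fin (F i) → Bool, (∑ j, σ i j * (if a i j then (1:ℝ) else 0))
      ∂(Measure.pi fun i => Measure.pi fun _ : Fin (F i) => (PMF.bernoulli p'.toNNReal (by simpa using ENNReal.toNNReal_mono ENNReal.one_ne_top hp1)).toMeasure)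
    = p'.toReal * ∑ j, σ i j :=
  (aux_pi_one (fun i => Measure.pi fun _ : Fin (F i) => (PMF.bernoulli p'.toNNReal (by simpa using ENNReal.toNNReal_mono ENNReal.one_ne_top hp1)).toMeasure) i
    (fun y : Fin (F i) → Bool => ∑ j, σ i j * (if y j then (1:ℝ) else 0))).trans
    (streamL1 p' hp1 (σ i))

lemma liftPair {n : ℕ} {F : Fin n → ℕ} (p' : ℝ≥0∞) (hp1 : p' ≤ 1)
    (σ : (i : Fin n) → Fin (F i) → ℝ) (hσ : ∀ i j, σ i j = 1 ∨ σ i j = -1) (i k : Fin n) :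
    ∫ a : (i : Fin n) → Fin (F i) → Bool,
      (∑ j, σ i j * (if a i j then (1:ℝ) else 0)) * (∑ j, σ k j * (if a k j then (1:ℝ) else 0))
      ∂(Measure.pi fun i => Measure.pi fun _ : Fin (F i) => (PMF.bernoulli p'.toNNReal (by simpa using ENNReal.toNNReal_mono ENNReal.one_ne_top hp1)).toMeasure)
    = if i = k then p'.toReal^2 * (∑ j, σ i j)^2 + (p'.toReal - p'.toReal^2) * (F i)
      else (p'.toReal * ∑ j, σ i j) * (p'.toReal * ∑ j, σ k j) := by
  by_cases h : i = k
  · subst h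
    rw [if_pos rfl]
    have e := (aux_pi_one (fun i => Measure.pi fun _ : Fin (F i) =>
        (PMF.bernoulli p'.toNNReal (by simpa using ENNReal.toNNReal_mono ENNReal.one_ne_top hp1)).toMeasure) i
      (fun y : Fin (F i) → Bool => (∑ j, σ i j * (if y j then (1:ℝ) else 0))^2)).trans
      (streamL2 p' hp1 (σ i) (hσ i))
    rw [← e]
    refine integral_congr_ae (Filter.Eventually.of_forall fun a => ?_)
    exact (pow_two _).symm
  · rw [if_neg h]
    have e := aux_pi_two (fun i => Measure.pi fun _ : Fin (F i) =>
        (PMF.bernoulli p'.toNNReal (by simpa using ENNReal.toNNReal_mono ENNReal.one_ne_top hp1)).toMeasure) i k h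
      (fun y : Fin (F i) → Bool => ∑ j, σ i j * (if y j then (1:ℝ) else 0))
      (fun y : Fin (F k) → Bool => ∑ j, σ k j * (if y j then (1:ℝ) else 0))
    rw [streamL1 p' hp1, streamL1 p' hp1] at e
    exact e


/-- Mean and variance bound for the rescaled sampled inner product of two streams, where each
update of `f` is sampled i.i.d. with probability `p_f` and each update of `g` with
probability `p_g`, independently. -/
theorem stmt_11 (n : ℕ)
    (fp fm gp gm : Fin n → ℕ)
    (F G : Fin n → ℕ) (hF : ∀ i, F i = fp i + fm i) (hG : ∀ i, G i = gp i + gm i)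
    (σf : (i : Fin n) → Fin (F i) → ℝ) (σg : (i : Fin n) → Fin (G i) → ℝ)
    (hσf : ∀ i j, σf i j = 1 ∨ σf i j = -1)
    (hσg : ∀ i j, σg i j = 1 ∨ σg i j = -1)
    (hσfp : ∀ i, (Finset.univ.filter (fun j => σf i j = 1)).card = fp i)
    (hσfm : ∀ i, (Finset.univ.filter (fun j => σf i j = -1)).card = fm i)
    (hσgp : ∀ i, (Finset.univ.filter (fun j => σg i j = 1)).card = gp i)
    (hσgm : ∀ i, (Finset.univ.filter (fun j => σg i j = -1)).card = gm i)
    (pf pg : ℝ≥0∞) (hpf1 : pf ≤ 1) (hpg1 : pg ≤ 1) (hpf0 : pf ≠ 0) (hpg0 : pg ≠ 0)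
    (μ : Measure (((i : Fin n) → Fin (F i) → Bool) × ((i : Fin n) → Fin (G i) → Bool)))
    (hμ : μ = (Measure.pi (fun i => Measure.pi
          (fun _ : Fin (F i) => (PMF.bernoulli pf.toNNReal (by simpa using ENNReal.toNNReal_mono ENNReal.one_ne_top hpf1)).toMeasure))).prod
        (Measure.pi (fun i => Measure.pi
          (fun _ : Fin (G i) => (PMF.bernoulli pg.toNNReal (by simpa using ENNReal.toNNReal_mono ENNReal.one_ne_top hpg1)).toMeasure))))
    (f g : Fin n → ℝ)
    (hf : ∀ i, f i = (fp i : ℝ) - fm i) (hg : ∀ i, g i = (gp i : ℝ) - gm i)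
    (X : (((i : Fin n) → Fin (F i) → Bool) × ((i : Fin n) → Fin (G i) → Bool)) → ℝ)
    (hX : ∀ ω, X ω = (pf.toReal)⁻¹ * (pg.toReal)⁻¹ *
      ∑ i, (∑ j, σf i j * (if ω.1 i j then (1:ℝ) else 0)) *
           (∑ j, σg i j * (if ω.2 i j then (1:ℝ) else 0))) :
    (∫ ω, X ω ∂μ = ∑ i, f i * g i) ∧
    (∫ ω, (X ω) ^ 2 ∂μ - (∫ ω, X ω ∂μ) ^ 2 ≤
      ∑ i, ((f i) ^ 2 * (pg.toReal)⁻¹ * (G i : ℝ) + (g i) ^ 2 * (pf.toReal)⁻¹ * (F i : ℝ) +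
        (pf.toReal)⁻¹ * (pg.toReal)⁻¹ * (F i : ℝ) * (G i : ℝ))) := by
  have hpt : pf ≠ ⊤ := (lt_of_le_of_lt hpf1 ENNReal.one_lt_top).ne
  have hqt : pg ≠ ⊤ := (lt_of_le_of_lt hpg1 ENNReal.one_lt_top).ne
  set p := pf.toReal with hpdef
  set q := pg.toReal with hqdef
  have hp0 : 0 < p := ENNReal.toReal_pos hpf0 hpt
  have hq0 : 0 < q := ENNReal.toReal_pos hpg0 hqt
  have hpne : p ≠ 0 := ne_of_gt hp0
  have hqne : q ≠ 0 := ne_of_gt hq0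
  have hp1r : p ≤ 1 := by
    rw [hpdef, show (1:ℝ) = (1:ℝ≥0∞).toReal by simp]
    exact ENNReal.toReal_mono ENNReal.one_ne_top hpf1
  have hq1r : q ≤ 1 := by
    rw [hqdef, show (1:ℝ) = (1:ℝ≥0∞).toReal by simp]
    exact ENNReal.toReal_mono ENNReal.one_ne_top hpg1
  subst hμ
  have hfs : ∀ i, (∑ j, σf i j) = f i := by
    intro i; rw [sum_pm (σf i) (hσf i), hσfp i, hσfm i, hf i]
  have hgs : ∀ i, (∑ j, σg i j) = g i := by
    intro i; rw [sum_pm (σg i) (hσg i), hσgp i, hσgm i, hg i]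
  have hSf : ∀ i, ∫ a : (i : Fin n) → Fin (F i) → Bool,
      (∑ j, σf i j * (if a i j then (1:ℝ) else 0))
      ∂(Measure.pi fun i => Measure.pi fun _ : Fin (F i) => (PMF.bernoulli pf.toNNReal (by simpa using ENNReal.toNNReal_mono ENNReal.one_ne_top hpf1)).toMeasure)
      = p * f i := by
    intro i; rw [liftMean pf hpf1 σf i, hfs i]
  have hSg : ∀ i, ∫ b : (i : Fin n) → Fin (G i) → Bool,
      (∑ j, σg i j * (if b i j then (1:ℝ) else 0))
      ∂(Measure.pi fun i => Measure.pi fun _ : Fin (G i) => (PMF.bernoulli pg.toNNReal (by simpa using ENNReal.toNNReal_mono ENNReal.one_ne_top hpg1)).toMeasure)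
      = q * g i := by
    intro i; rw [liftMean pg hpg1 σg i, hgs i]
  set Af : Fin n → Fin n → ℝ := fun i k =>
    if i = k then p^2 * (f i)^2 + (p - p^2) * (F i) else (p * f i) * (p * f k) with hAfdef
  set Bg : Fin n → Fin n → ℝ := fun i k =>
    if i = k then q^2 * (g i)^2 + (q - q^2) * (G i) else (q * g i) * (q * g k) with hBgdef
  have hAf : ∀ i k, ∫ a : (i : Fin n) → Fin (F i) → Bool,
      (∑ j, σf i j * (if a i j then (1:ℝ) else 0)) *
      (∑ j, σf k j * (if a k j then (1:ℝ) else 0))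
      ∂(Measure.pi fun i => Measure.pi fun _ : Fin (F i) => (PMF.bernoulli pf.toNNReal (by simpa using ENNReal.toNNReal_mono ENNReal.one_ne_top hpf1)).toMeasure)
      = Af i k := by
    intro i k
    rw [liftPair pf hpf1 σf hσf i k, hfs i, hfs k]
  have hBg : ∀ i k, ∫ b : (i : Fin n) → Fin (G i) → Bool,
      (∑ j, σg i j * (if b i j then (1:ℝ) else 0)) *
      (∑ j, σg k j * (if b k j then (1:ℝ) else 0))
      ∂(Measure.pi fun i => Measure.pi fun _ : Fin (G i) => (PMF.bernoulli pg.toNNReal (by simpa using ENNReal.toNNReal_mono ENNReal.one_ne_top hpg1)).toMeasure)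
      = Bg i k := by
    intro i k
    rw [liftPair pg hpg1 σg hσg i k, hgs i, hgs k]
  have hMean : ∫ ω, X ω ∂((Measure.pi fun i => Measure.pi fun _ : Fin (F i) =>
        (PMF.bernoulli pf.toNNReal (by simpa using ENNReal.toNNReal_mono ENNReal.one_ne_top hpf1)).toMeasure).prod
      (Measure.pi fun i => Measure.pi fun _ : Fin (G i) => (PMF.bernoulli pg.toNNReal (by simpa using ENNReal.toNNReal_mono ENNReal.one_ne_top hpg1)).toMeasure))
      = ∑ i, f i * g i := by
    simp only [hX]
    rw [integral_const_mul, integral_finset_sum _ (fun i _ => Integrable.of_finite)]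
    have ht : ∀ i ∈ (Finset.univ : Finset (Fin n)),
        (∫ ω : ((i : Fin n) → Fin (F i) → Bool) × ((i : Fin n) → Fin (G i) → Bool),
          (∑ j, σf i j * (if ω.1 i j then (1:ℝ) else 0)) *
          (∑ j, σg i j * (if ω.2 i j then (1:ℝ) else 0))
          ∂((Measure.pi fun i => Measure.pi fun _ : Fin (F i) =>
              (PMF.bernoulli pf.toNNReal (by simpa using ENNReal.toNNReal_mono ENNReal.one_ne_top hpf1)).toMeasure).prod
            (Measure.pi fun i => Measure.pi fun _ : Fin (G i) =>
              (PMF.bernoulli pg.toNNReal (by simpa using ENNReal.toNNReal_mono ENNReal.one_ne_top hpg1)).toMeasure)))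
          = (p * f i) * (q * g i) := by
      intro i _
      have e := integral_prod_mul
        (μ := Measure.pi fun i => Measure.pi fun _ : Fin (F i) =>
          (PMF.bernoulli pf.toNNReal (by simpa using ENNReal.toNNReal_mono ENNReal.one_ne_top hpf1)).toMeasure)
        (ν := Measure.pi fun i => Measure.pi fun _ : Fin (G i) =>
          (PMF.bernoulli pg.toNNReal (by simpa using ENNReal.toNNReal_mono ENNReal.one_ne_top hpg1)).toMeasure)
        (fun a : (i : Fin n) → Fin (F i) → Bool => ∑ j, σf i j * (if a i j then (1:ℝ) else 0))
        (fun b : (i : Fin n) → Fin (G i) → Bool => ∑ j, σg i j * (if b i j then (1:ℝ) else 0))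
      rw [hSf i, hSg i] at e
      exact e
    rw [Finset.sum_congr rfl ht, Finset.mul_sum]
    refine Finset.sum_congr rfl fun i _ => ?_
    field_simp
  have hXsq : ∀ ω : ((i : Fin n) → Fin (F i) → Bool) × ((i : Fin n) → Fin (G i) → Bool),
      (X ω)^2 = (p⁻¹ * q⁻¹)^2 * ∑ i, ∑ k,
        ((∑ j, σf i j * (if ω.1 i j then (1:ℝ) else 0)) *
         (∑ j, σf k j * (if ω.1 k j then (1:ℝ) else 0))) *
        ((∑ j, σg i j * (if ω.2 i j then (1:ℝ) else 0)) *
         (∑ j, σg k j * (if ω.2 k j then (1:ℝ) else 0))) := by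
    intro ω
    rw [hX ω, mul_pow]
    congr 1
    rw [sq, Finset.sum_mul_sum]
    exact Finset.sum_congr rfl fun i _ => Finset.sum_congr rfl fun k _ => by ring
  have h2 : ∫ ω, (X ω)^2 ∂((Measure.pi fun i => Measure.pi fun _ : Fin (F i) =>
        (PMF.bernoulli pf.toNNReal (by simpa using ENNReal.toNNReal_mono ENNReal.one_ne_top hpf1)).toMeasure).prod
      (Measure.pi fun i => Measure.pi fun _ : Fin (G i) => (PMF.bernoulli pg.toNNReal (by simpa using ENNReal.toNNReal_mono ENNReal.one_ne_top hpg1)).toMeasure))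
      = (p⁻¹ * q⁻¹)^2 * ∑ i, ∑ k, Af i k * Bg i k := by
    simp only [hXsq]
    rw [integral_const_mul, integral_finset_sum _ (fun i _ => Integrable.of_finite)]
    congr 1
    refine Finset.sum_congr rfl fun i _ => ?_
    rw [integral_finset_sum _ (fun k _ => Integrable.of_finite)]
    refine Finset.sum_congr rfl fun k _ => ?_
    have e := integral_prod_mul
      (μ := Measure.pi fun i => Measure.pi fun _ : Fin (F i) =>
        (PMF.bernoulli pf.toNNReal (by simpa using ENNReal.toNNReal_mono ENNReal.one_ne_top hpf1)).toMeasure)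
      (ν := Measure.pi fun i => Measure.pi fun _ : Fin (G i) =>
        (PMF.bernoulli pg.toNNReal (by simpa using ENNReal.toNNReal_mono ENNReal.one_ne_top hpg1)).toMeasure)
      (fun a : (i : Fin n) → Fin (F i) → Bool =>
        (∑ j, σf i j * (if a i j then (1:ℝ) else 0)) *
        (∑ j, σf k j * (if a k j then (1:ℝ) else 0)))
      (fun b : (i : Fin n) → Fin (G i) → Bool =>
        (∑ j, σg i j * (if b i j then (1:ℝ) else 0)) *
        (∑ j, σg k j * (if b k j then (1:ℝ) else 0)))
    rw [hAf i k, hBg i k] at e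
    exact e
  refine ⟨hMean, ?_⟩
  rw [h2, hMean]
  have key : (p⁻¹ * q⁻¹)^2 * (∑ i, ∑ k, Af i k * Bg i k) - (∑ i, f i * g i)^2
      = ∑ i, ((p⁻¹ * q⁻¹)^2 * (Af i i * Bg i i) - (f i * g i)^2) := by
    rw [Finset.mul_sum, show (∑ i, f i * g i)^2 = ∑ i, ∑ k, (f i * g i) * (f k * g k) from by
      rw [sq, Finset.sum_mul_sum], ← Finset.sum_sub_distrib]
    refine Finset.sum_congr rfl fun i _ => ?_
    rw [Finset.mul_sum, ← Finset.sum_sub_distrib]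
    refine (Finset.sum_eq_single i (fun k _ hk => ?_) (by simp)).trans (by ring)
    have hik : ¬ i = k := fun h => hk h.symm
    simp only [hAfdef, hBgdef, if_neg hik]
    rw [sub_eq_zero]
    field_simp
  rw [key]
  refine Finset.sum_le_sum fun i _ => ?_
  have h1p : 1 ≤ p⁻¹ := (one_le_inv₀ hp0).mpr hp1r
  have h1q : 1 ≤ q⁻¹ := (one_le_inv₀ hq0).mpr hq1r
  have hFi : (0:ℝ) ≤ F i := Nat.cast_nonneg _
  have hGi : (0:ℝ) ≤ G i := Nat.cast_nonneg _
  have hAfii : Af i i = p^2 * (f i)^2 + (p - p^2) * (F i) := by simp [hAfdef]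
  have hBgii : Bg i i = q^2 * (g i)^2 + (q - q^2) * (G i) := by simp [hBgdef]
  have hdiag : (p⁻¹ * q⁻¹)^2 * (Af i i * Bg i i) - (f i * g i)^2
      = (f i)^2 * (q⁻¹ - 1) * (G i) + (g i)^2 * (p⁻¹ - 1) * (F i)
        + (p⁻¹ - 1) * (q⁻¹ - 1) * (F i) * (G i) := by
    rw [hAfii, hBgii]
    field_simp
    ring
  rw [hdiag]
  nlinarith [mul_nonneg (sq_nonneg (f i)) hGi, mul_nonneg (sq_nonneg (g i)) hFi,
    mul_nonneg (mul_nonneg hFi hGi) (by linarith : (0:ℝ) ≤ p⁻¹ + q⁻¹ - 1)]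
end

section
/- Let X₁, …, X_N be i.i.d. Bernoulli(p) random variables with Np ≥ 3γ^{-3} ln(2/δ) for some γ, δ ∈ (0,1), and let I ≤ N be a fixed integer. Consider S = p^{-1} Σ_{j=1}^{I} X_j. Then Pr[ |S − I| > γN ] ≤ δ. -/
open MeasureTheory
open scoped ENNReal
set_option maxHeartbeats 1000000


private lemma aux_log_lb {x : ℝ} (hx : 0 ≤ x) : 2 * x / (2 + x) ≤ Real.log (1 + x) := by
  set F : ℝ → ℝ := fun y => Real.log (1 + y) - 2 * y / (2 + y) with hF
  have hder : ∀ y : ℝ, 0 < 1 + y →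
      HasDerivAt F ((1 + y)⁻¹ * 1 - (2 * (2 + y) - 2 * y * 1) / (2 + y) ^ 2) y := by
    intro y hy
    have h2 : (2 : ℝ) + y ≠ 0 := by linarith
    have hlog : HasDerivAt (fun y : ℝ => Real.log (1 + y)) ((1 + y)⁻¹ * 1) y :=
      (Real.hasDerivAt_log (by linarith)).comp y ((hasDerivAt_id y).const_add 1)
    have hfrac : HasDerivAt (fun y : ℝ => 2 * y / (2 + y))
        ((2 * (2 + y) - 2 * y * 1) / (2 + y) ^ 2) y := by
      have := ((hasDerivAt_id y).const_mul 2).div ((hasDerivAt_id y).const_add 2) h2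
      exact this.congr_deriv (by simp only [id]; ring)
    exact hlog.sub hfrac
  have hmono : MonotoneOn F (Set.Ici (0 : ℝ)) := by
    apply monotoneOn_of_hasDerivWithinAt_nonneg (convex_Ici 0)
      (f' := fun y => (1 + y)⁻¹ * 1 - (2 * (2 + y) - 2 * y * 1) / (2 + y) ^ 2)
    · intro y hy
      exact ((hder y (by simp at hy; linarith)).continuousAt).continuousWithinAt
    · intro y hy
      rw [interior_Ici] at hy
      exact (hder y (by simp at hy; linarith)).hasDerivWithinAt
    · intro y hy
      rw [interior_Ici] at hy
      have hy0 : (0:ℝ) < y := hy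
      have h1 : (0:ℝ) < 1 + y := by linarith
      have h2 : (0:ℝ) < 2 + y := by linarith
      have heq : (1 + y)⁻¹ * 1 - (2 * (2 + y) - 2 * y * 1) / (2 + y) ^ 2
          = y ^ 2 / ((1 + y) * (2 + y) ^ 2) := by
        field_simp
        ring
      rw [heq]
      positivity
  have h0 : F 0 ≤ F x := hmono Set.self_mem_Ici hx hx
  simp only [hF] at h0
  norm_num at h0
  linarith

private lemma aux_log_lb2 {x : ℝ} (hx : 0 ≤ x) (hx1 : x < 1) :
    -(x * (2 - x) / (2 * (1 - x))) ≤ Real.log (1 - x) := by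
  set F : ℝ → ℝ := fun y => Real.log (1 - y) + y * (2 - y) / (2 * (1 - y)) with hF
  have hder : ∀ y : ℝ, y < 1 →
      HasDerivAt F ((1 - y)⁻¹ * (-1) +
        ((2 - 2 * y) * (2 * (1 - y)) - y * (2 - y) * (2 * (-1))) / (2 * (1 - y)) ^ 2) y := by
    intro y hy
    have h1 : (0:ℝ) < 1 - y := by linarith
    have hlog : HasDerivAt (fun y : ℝ => Real.log (1 - y)) ((1 - y)⁻¹ * (-1)) y := by
      have : HasDerivAt (fun y : ℝ => 1 - y) (-1) y := by
        simpa using ((hasDerivAt_id y).const_sub 1)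
      exact (Real.hasDerivAt_log h1.ne').comp y this
    have hnum : HasDerivAt (fun y : ℝ => y * (2 - y)) (1 * (2 - y) + y * (-1)) y := by
      have h2 : HasDerivAt (fun y : ℝ => 2 - y) (-1) y := by
        simpa using ((hasDerivAt_id y).const_sub 2)
      exact (hasDerivAt_id y).mul h2
    have hden : HasDerivAt (fun y : ℝ => 2 * (1 - y)) (2 * (-1)) y := by
      have : HasDerivAt (fun y : ℝ => 1 - y) (-1) y := by
        simpa using ((hasDerivAt_id y).const_sub 1)
      exact this.const_mul 2
    have hfrac := hnum.div hden (by positivity : (2:ℝ) * (1 - y) ≠ 0)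
    have := hlog.add hfrac
    refine this.congr_deriv ?_
    ring
  have hmono : MonotoneOn F (Set.Ico (0:ℝ) 1) := by
    apply monotoneOn_of_hasDerivWithinAt_nonneg (convex_Ico 0 1)
      (f' := fun y => (1 - y)⁻¹ * (-1) +
        ((2 - 2 * y) * (2 * (1 - y)) - y * (2 - y) * (2 * (-1))) / (2 * (1 - y)) ^ 2)
    · intro y hy
      exact ((hder y hy.2).continuousAt).continuousWithinAt
    · intro y hy
      rw [interior_Ico] at hy
      exact (hder y hy.2).hasDerivWithinAt
    · intro y hy
      rw [interior_Ico] at hy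
      have h1 : (0:ℝ) < 1 - y := by linarith [hy.2]
      have heq : (1 - y)⁻¹ * (-1) +
          ((2 - 2 * y) * (2 * (1 - y)) - y * (2 - y) * (2 * (-1))) / (2 * (1 - y)) ^ 2
          = y ^ 2 / (2 * (1 - y) ^ 2) := by
        field_simp
        ring
      rw [heq]
      positivity
  have h0 : F 0 ≤ F x := hmono ⟨le_refl 0, one_pos⟩ ⟨hx, hx1⟩ hx
  simp only [hF] at h0
  norm_num at h0
  linarith


private lemma pi_bern_mgf (N I : ℕ) (p : ℝ≥0∞) (hp1 : p ≤ 1) (t : ℝ) :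
    ProbabilityTheory.mgf
      (fun ω : Fin N → Bool => ∑ j ∈ Finset.univ.filter (fun j : Fin N => (j : ℕ) < I),
        (if ω j then (1:ℝ) else 0))
      (Measure.pi fun _ => (PMF.bernoulli p.toNNReal (by simpa using ENNReal.toNNReal_mono ENNReal.one_ne_top hp1)).toMeasure) t
    = ((1 - p.toReal) + p.toReal * Real.exp t)
        ^ (Finset.univ.filter (fun j : Fin N => (j : ℕ) < I)).card := by
  set ν := (PMF.bernoulli p.toNNReal (by simpa using ENNReal.toNNReal_mono ENNReal.one_ne_top hp1)).toMeasure with hν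
  set g : Fin N → Bool → ℝ :=
    fun j b => if (j : ℕ) < I then (if b then Real.exp t else 1) else 1 with hg
  have step1 : ∀ ω : Fin N → Bool,
      Real.exp (t * ∑ j ∈ Finset.univ.filter (fun j : Fin N => (j : ℕ) < I),
        (if ω j then (1:ℝ) else 0)) = ∏ j : Fin N, g j (ω j) := by
    intro ω
    rw [Finset.mul_sum, Real.exp_sum, Finset.prod_filter]
    refine Finset.prod_congr rfl fun j _ => ?_
    simp only [hg]
    cases hωj : ω j <;> simp
  have hsingle : ∀ ω : Fin N → Bool, (Measure.pi fun _ : Fin N => ν) {ω} = ∏ j, ν {ω j} := by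
    intro ω
    rw [← Set.univ_pi_singleton ω]
    exact Measure.pi_pi _ _
  have hb : ∀ b : Bool, (ν {b}).toReal = if b then p.toReal else 1 - p.toReal := by
    intro b
    rw [hν, PMF.toMeasure_apply_singleton _ _ (measurableSet_singleton b)]
    erw [PMF.bernoulli_apply]
    cases b
    · simp [PMF.bernoulli_apply, ENNReal.coe_toNNReal (ne_top_of_le_ne_top ENNReal.one_ne_top hp1), ENNReal.toReal_sub_of_le hp1 ENNReal.one_ne_top]
    · simp [PMF.bernoulli_apply, ENNReal.coe_toNNReal_eq_toReal]
  rw [ProbabilityTheory.mgf]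
  beta_reduce
  calc (∫ ω, Real.exp (t * ∑ j ∈ Finset.univ.filter (fun j : Fin N => (j : ℕ) < I),
        (if ω j then (1:ℝ) else 0)) ∂(Measure.pi fun _ => ν))
      = ∫ ω, ∏ j, g j (ω j) ∂(Measure.pi fun _ => ν) := by
        exact integral_congr_ae (Filter.Eventually.of_forall step1)
    _ = ∑ ω : Fin N → Bool, ((Measure.pi fun _ : Fin N => ν) {ω}).toReal • ∏ j, g j (ω j) :=
        integral_fintype .of_finite
    _ = ∑ ω : Fin N → Bool, ∏ j, ((ν {ω j}).toReal * g j (ω j)) := by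
        refine Finset.sum_congr rfl fun ω _ => ?_
        rw [hsingle, ENNReal.toReal_prod, smul_eq_mul, ← Finset.prod_mul_distrib]
    _ = ∏ j : Fin N, ∑ b : Bool, ((ν {b}).toReal * g j b) :=
        (Fintype.prod_sum (fun j b => (ν {b}).toReal * g j b)).symm
    _ = ∏ j : Fin N, (if (j : ℕ) < I then (1 - p.toReal) + p.toReal * Real.exp t else 1) := by
        refine Finset.prod_congr rfl fun j _ => ?_
        rw [Fintype.sum_bool, hb, hb]
        by_cases hj : (j : ℕ) < I <;> simp [hg, hj] <;> ring
    _ = ((1 - p.toReal) + p.toReal * Real.exp t)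
        ^ (Finset.univ.filter (fun j : Fin N => (j : ℕ) < I)).card := by
        rw [Finset.prod_ite, Finset.prod_const_one, mul_one, Finset.prod_const]

/-- Sampling concentration: if `X₁, …, X_N` are i.i.d. Bernoulli(p) with
`N p ≥ 3 γ⁻³ ln(2/δ)` and `I ≤ N`, then `S = p⁻¹ Σ_{j≤I} X_j` satisfies
`Pr[|S - I| > γ N] ≤ δ`. -/
theorem stmt_19 (N I : ℕ) (hI : I ≤ N)
    (γ δ : ℝ) (hγ : γ ∈ Set.Ioo (0:ℝ) 1) (hδ : δ ∈ Set.Ioo (0:ℝ) 1)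
    (p : ℝ≥0∞) (hp1 : p ≤ 1)
    (hNp : 3 * γ⁻¹ ^ 3 * Real.log (2 / δ) ≤ (N : ℝ) * p.toReal)
    (μ : Measure (Fin N → Bool))
    (hμ : μ = Measure.pi (fun _ => (PMF.bernoulli p.toNNReal (by simpa using ENNReal.toNNReal_mono ENNReal.one_ne_top hp1)).toMeasure))
    (S : (Fin N → Bool) → ℝ)
    (hS : ∀ ω, S ω = (p.toReal)⁻¹ *
      ∑ j ∈ Finset.univ.filter (fun j : Fin N => (j : ℕ) < I),
        (if ω j then (1:ℝ) else 0)) :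
    μ {ω | γ * N < |S ω - I|} ≤ ENNReal.ofReal δ := by
  obtain ⟨hγ0, hγ1⟩ := hγ
  obtain ⟨hδ0, hδ1⟩ := hδ
  subst hμ
  have hL : 0 < Real.log (2 / δ) := Real.log_pos (by rw [lt_div_iff₀ hδ0]; linarith)
  set q : ℝ := p.toReal with hqdef
  have hNq0 : 0 < (N : ℝ) * q := lt_of_lt_of_le (by positivity) hNp
  have hq0 : 0 < q := by
    by_contra h
    push_neg at h
    nlinarith [Nat.cast_nonneg (α := ℝ) N]
  have hq1 : q ≤ 1 := by
    have := ENNReal.toReal_mono ENNReal.one_ne_top hp1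
    simpa using this
  have hIN : (I : ℝ) ≤ (N : ℝ) := Nat.cast_le.mpr hI
  have hLNq : Real.log (2 / δ) ≤ (N : ℝ) * q * γ ^ 3 / 3 := by
    have hinv : γ⁻¹ ^ 3 * γ ^ 3 = 1 := by field_simp
    nlinarith [mul_le_mul_of_nonneg_right hNp (le_of_lt (show (0:ℝ) < γ ^ 3 by positivity))]
  set T : (Fin N → Bool) → ℝ :=
    fun ω => ∑ j ∈ Finset.univ.filter (fun j : Fin N => (j : ℕ) < I),
      (if ω j then (1:ℝ) else 0) with hT
  have hTapp : ∀ ω, T ω = ∑ j ∈ Finset.univ.filter (fun j : Fin N => (j : ℕ) < I),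
      (if ω j then (1:ℝ) else 0) := fun ω => by rw [hT]
  have hcard : (Finset.univ.filter (fun j : Fin N => (j : ℕ) < I)).card = I := by
    have hbij := Finset.card_bij' (s := Finset.univ.filter (fun j : Fin N => (j : ℕ) < I))
      (t := Finset.range I)
      (i := fun j _ => (j : ℕ))
      (j := fun k hk => ⟨k, lt_of_lt_of_le (Finset.mem_range.mp hk) hI⟩)
      (fun a ha => Finset.mem_range.mpr (Finset.mem_filter.mp ha).2)
      (fun a ha => Finset.mem_filter.mpr ⟨Finset.mem_univ _, Finset.mem_range.mp ha⟩)
      (fun a _ => rfl)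
      (fun a _ => rfl)
    rw [hbij, Finset.card_range]
  -- generic mgf facts
  have hbase_nonneg : ∀ t : ℝ, 0 ≤ (1 - q) + q * Real.exp t := by
    intro t
    have := Real.exp_pos t
    nlinarith
  have hpow : ∀ t : ℝ, ((1 - q) + q * Real.exp t) ^ I ≤
      Real.exp ((I : ℝ) * (q * (Real.exp t - 1))) := by
    intro t
    have hle : (1 - q) + q * Real.exp t ≤ Real.exp (q * (Real.exp t - 1)) := by
      have h := Real.add_one_le_exp (q * (Real.exp t - 1))
      nlinarith
    calc ((1 - q) + q * Real.exp t) ^ I ≤ (Real.exp (q * (Real.exp t - 1))) ^ I :=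
          pow_le_pow_left₀ (hbase_nonneg t) hle I
      _ = Real.exp ((I : ℝ) * (q * (Real.exp t - 1))) := (Real.exp_nat_mul _ I).symm
  have hmgfT : ∀ t : ℝ, ProbabilityTheory.mgf T
      (Measure.pi fun _ : Fin N => (PMF.bernoulli p.toNNReal (by simpa using ENNReal.toNNReal_mono ENNReal.one_ne_top hp1)).toMeasure) t
      = ((1 - q) + q * Real.exp t) ^ I := by
    intro t
    rw [hT]
    rw [pi_bern_mgf N I p hp1 t, hcard]
  have hexp_half : Real.exp (-((N : ℝ) * q * γ ^ 3 / 3)) ≤ δ / 2 := by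
    have hlog : Real.log (δ / 2) = -Real.log (2 / δ) := by
      rw [show δ / 2 = (2 / δ)⁻¹ by rw [inv_div], Real.log_inv]
    rw [show δ / 2 = Real.exp (Real.log (δ / 2)) from (Real.exp_log (by linarith)).symm]
    rw [Real.exp_le_exp, hlog]
    linarith
  -- upper tail
  have hA : ((Measure.pi fun _ : Fin N => (PMF.bernoulli p.toNNReal (by simpa using ENNReal.toNNReal_mono ENNReal.one_ne_top hp1)).toMeasure)
      {ω | (I : ℝ) * q + q * (γ * N) ≤ T ω}).toReal ≤ δ / 2 := by
    set c : ℝ := Real.log (1 + γ) with hc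
    have hc0 : 0 ≤ c := Real.log_nonneg (by linarith)
    have hec : Real.exp c = 1 + γ := Real.exp_log (by linarith)
    have hc_ub : c ≤ γ := by
      have := Real.log_le_sub_one_of_pos (show (0:ℝ) < 1 + γ by linarith)
      simpa [hc] using this
    have hc_lb : 2 * γ ≤ c * (2 + γ) := by
      have h := aux_log_lb hγ0.le
      rw [div_le_iff₀ (by linarith)] at h
      exact h
    have h1 := ProbabilityTheory.measure_ge_le_exp_mul_mgf
      (μ := Measure.pi fun _ : Fin N => (PMF.bernoulli p.toNNReal (by simpa using ENNReal.toNNReal_mono ENNReal.one_ne_top hp1)).toMeasure)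
      (X := T) ((I : ℝ) * q + q * (γ * N)) hc0 .of_finite
    rw [hmgfT c] at h1
    refine h1.trans ?_
    calc Real.exp (-c * ((I : ℝ) * q + q * (γ * N))) * ((1 - q) + q * Real.exp c) ^ I
        ≤ Real.exp (-c * ((I : ℝ) * q + q * (γ * N))) *
          Real.exp ((I : ℝ) * (q * (Real.exp c - 1))) := by
          exact mul_le_mul_of_nonneg_left (hpow c) (Real.exp_pos _).le
      _ = Real.exp (-c * ((I : ℝ) * q + q * (γ * N)) + (I : ℝ) * (q * (Real.exp c - 1))) :=
          (Real.exp_add _ _).symm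
      _ ≤ Real.exp (-((N : ℝ) * q * γ ^ 3 / 3)) := by
          rw [Real.exp_le_exp, hec]
          have e1 : (I : ℝ) * q * γ - c * ((I : ℝ) * q) ≤
              (N : ℝ) * q * γ - c * ((N : ℝ) * q) := by
            nlinarith [mul_nonneg (mul_nonneg (sub_nonneg.mpr hIN) hq0.le) (sub_nonneg.mpr hc_ub)]
          have h3 : γ + γ ^ 3 / 3 ≤ (1 + γ) * c := by
            nlinarith [mul_le_mul_of_nonneg_left hc_lb (show (0:ℝ) ≤ 1 + γ by linarith),
              mul_nonneg (mul_nonneg hγ0.le hγ0.le) (sub_nonneg.mpr hγ1.le),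
              mul_nonneg (mul_nonneg (mul_nonneg hγ0.le hγ0.le) hγ0.le) (sub_nonneg.mpr hγ1.le),
              show (0:ℝ) < 2 + γ by linarith]
          have e2 : (N : ℝ) * q * γ - c * ((N : ℝ) * q + q * (γ * N)) ≤
              -((N : ℝ) * q * γ ^ 3 / 3) := by
            nlinarith [mul_le_mul_of_nonneg_left h3 hNq0.le]
          nlinarith [e1, e2]
      _ ≤ δ / 2 := hexp_half
  -- lower tail
  have hB : ((Measure.pi fun _ : Fin N => (PMF.bernoulli p.toNNReal (by simpa using ENNReal.toNNReal_mono ENNReal.one_ne_top hp1)).toMeasure)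
      {ω | T ω ≤ (I : ℝ) * q - q * (γ * N)}).toReal ≤ δ / 2 := by
    set d : ℝ := Real.log (1 - γ) with hd
    have hd0 : d ≤ 0 := Real.log_nonpos (by linarith) (by linarith)
    have hed : Real.exp d = 1 - γ := Real.exp_log (by linarith)
    have hd_ub : d ≤ -γ := by
      have := Real.log_le_sub_one_of_pos (show (0:ℝ) < 1 - γ by linarith)
      simpa [hd] using this
    have hd_lb : -(γ * (2 - γ)) ≤ d * (2 * (1 - γ)) := by
      have h := aux_log_lb2 hγ0.le hγ1
      rw [show -(γ * (2 - γ) / (2 * (1 - γ))) = (-(γ * (2 - γ))) / (2 * (1 - γ)) by ring,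
        div_le_iff₀ (by nlinarith)] at h
      exact h
    have h1 := ProbabilityTheory.measure_le_le_exp_mul_mgf
      (μ := Measure.pi fun _ : Fin N => (PMF.bernoulli p.toNNReal (by simpa using ENNReal.toNNReal_mono ENNReal.one_ne_top hp1)).toMeasure)
      (X := T) ((I : ℝ) * q - q * (γ * N)) hd0 .of_finite
    rw [hmgfT d] at h1
    refine h1.trans ?_
    calc Real.exp (-d * ((I : ℝ) * q - q * (γ * N))) * ((1 - q) + q * Real.exp d) ^ I
        ≤ Real.exp (-d * ((I : ℝ) * q - q * (γ * N))) *
          Real.exp ((I : ℝ) * (q * (Real.exp d - 1))) := by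
          exact mul_le_mul_of_nonneg_left (hpow d) (Real.exp_pos _).le
      _ = Real.exp (-d * ((I : ℝ) * q - q * (γ * N)) + (I : ℝ) * (q * (Real.exp d - 1))) :=
          (Real.exp_add _ _).symm
      _ ≤ Real.exp (-((N : ℝ) * q * γ ^ 3 / 3)) := by
          rw [Real.exp_le_exp, hed]
          have e1 : -((I : ℝ) * q * γ) - d * ((I : ℝ) * q) ≤
              -((N : ℝ) * q * γ) - d * ((N : ℝ) * q) := by
            nlinarith [mul_nonneg (mul_nonneg (sub_nonneg.mpr hIN) hq0.le)
              (show (0:ℝ) ≤ -γ - d by linarith)]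
          have h3 : γ ^ 3 / 3 ≤ γ + (1 - γ) * d := by
            nlinarith [hd_lb, mul_nonneg (mul_nonneg hγ0.le hγ0.le) (sub_nonneg.mpr hγ1.le)]
          have e2 : -((N : ℝ) * q * γ) - d * ((N : ℝ) * q - q * (γ * N)) ≤
              -((N : ℝ) * q * γ ^ 3 / 3) := by
            nlinarith [mul_le_mul_of_nonneg_left h3 hNq0.le]
          nlinarith [e1, e2]
      _ ≤ δ / 2 := hexp_half
  -- combine
  have hsub : {ω : Fin N → Bool | γ * N < |S ω - I|} ⊆
      {ω | (I : ℝ) * q + q * (γ * N) ≤ T ω} ∪ {ω | T ω ≤ (I : ℝ) * q - q * (γ * N)} := by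
    intro ω hω
    simp only [Set.mem_setOf_eq] at hω
    have hSω : S ω - I = q⁻¹ * (T ω - I * q) := by
      rw [hS ω, hTapp ω]
      field_simp
    rw [hSω, abs_mul, abs_of_pos (inv_pos.mpr hq0)] at hω
    have h2 : q * (γ * N) < |T ω - I * q| := by
      have h := mul_lt_mul_of_pos_left hω hq0
      rwa [show q * (q⁻¹ * |T ω - (I : ℝ) * q|) = |T ω - (I : ℝ) * q| by field_simp] at h
    rcases lt_abs.mp h2 with h | h
    · left
      simp only [Set.mem_setOf_eq]
      linarith
    · right
      simp only [Set.mem_setOf_eq]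
      linarith [neg_sub (T ω) ((I : ℝ) * q) ▸ h]
  haveI : IsProbabilityMeasure
      (Measure.pi fun _ : Fin N => (PMF.bernoulli p.toNNReal (by simpa using ENNReal.toNNReal_mono ENNReal.one_ne_top hp1)).toMeasure) := by infer_instance
  calc (Measure.pi fun _ : Fin N => (PMF.bernoulli p.toNNReal (by simpa using ENNReal.toNNReal_mono ENNReal.one_ne_top hp1)).toMeasure)
        {ω | γ * N < |S ω - I|}
      ≤ (Measure.pi fun _ : Fin N => (PMF.bernoulli p.toNNReal (by simpa using ENNReal.toNNReal_mono ENNReal.one_ne_top hp1)).toMeasure)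
        ({ω | (I : ℝ) * q + q * (γ * N) ≤ T ω} ∪ {ω | T ω ≤ (I : ℝ) * q - q * (γ * N)}) :=
        measure_mono hsub
    _ ≤ (Measure.pi fun _ : Fin N => (PMF.bernoulli p.toNNReal (by simpa using ENNReal.toNNReal_mono ENNReal.one_ne_top hp1)).toMeasure)
          {ω | (I : ℝ) * q + q * (γ * N) ≤ T ω} +
        (Measure.pi fun _ : Fin N => (PMF.bernoulli p.toNNReal (by simpa using ENNReal.toNNReal_mono ENNReal.one_ne_top hp1)).toMeasure)
          {ω | T ω ≤ (I : ℝ) * q - q * (γ * N)} := measure_union_le _ _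
    _ ≤ ENNReal.ofReal (δ / 2) + ENNReal.ofReal (δ / 2) := by
        gcongr
        · exact (ENNReal.le_ofReal_iff_toReal_le (measure_ne_top _ _) (by linarith)).mpr hA
        · exact (ENNReal.le_ofReal_iff_toReal_le (measure_ne_top _ _) (by linarith)).mpr hB
    _ = ENNReal.ofReal δ := by
        rw [← ENNReal.ofReal_add (by linarith) (by linarith)]
        norm_num
end
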